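/- arXiv:2509.13550 — 7 statements merged into one kernel-verified Lean document; each statement's English description precedes it below -/
import Mathlib

section
/- Let L > 0, t ≥ 1, and let α_0, ..., α_{t-1} be real numbers with 0 ≤ α_k ≤ 1/L for all k. Then the maximum over ζ ∈ [0, L] of ζ · ∏_{k=0}^{t-1}(1 - α_k ζ) is at least L/(4(t+1)). -/
theorem oblivious_product_extremal (L : ℝ) (hL : 0 < L) (t : ℕ) (ht : 1 ≤ t)
    (α : Fin t → ℝ) (hα : ∀ k, 0 ≤ α k ∧ α k ≤ 1 / L) :
    ∃ ζ ∈ Set.Icc (0 : ℝ) L,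
      L / (4 * (t + 1)) ≤ ζ * ∏ k, (1 - α k * ζ) := by
  have ht1 : (0:ℝ) < (t:ℝ) + 1 := by positivity
  set ζ := L / (2 * ((t:ℝ) + 1)) with hζ
  have hζpos : 0 < ζ := by positivity
  have hζL : ζ ≤ L := by
    rw [hζ, div_le_iff₀ (by positivity)]
    have : (1:ℝ) ≤ (t:ℝ) := Nat.one_le_cast.mpr ht
    nlinarith
  refine ⟨ζ, ⟨le_of_lt hζpos, hζL⟩, ?_⟩
  set c : ℝ := 1 / (2 * ((t:ℝ) + 1)) with hc
  have hc1 : c ≤ 1 := by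
    rw [hc, div_le_one (by positivity)]; linarith
  have hfac : ∀ k : Fin t, 1 - c ≤ 1 - α k * ζ := by
    intro k
    have h1 : α k * ζ ≤ (1 / L) * ζ :=
      mul_le_mul_of_nonneg_right (hα k).2 hζpos.le
    have h2 : (1 / L) * ζ = c := by
      rw [hζ, hc]; field_simp
    linarith
  have hprod : (1 - c) ^ t ≤ ∏ k : Fin t, (1 - α k * ζ) := by
    calc (1 - c) ^ t = ∏ _k : Fin t, (1 - c) := by
          rw [Finset.prod_const, Finset.card_univ, Fintype.card_fin]
      _ ≤ ∏ k : Fin t, (1 - α k * ζ) :=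
          Finset.prod_le_prod (fun k _ => by linarith) (fun k _ => hfac k)
  have hbern : 1 - (t:ℝ) * c ≤ (1 - c) ^ t := by
    have := one_add_mul_le_pow (a := -c) (by linarith) t
    simpa [mul_comm, mul_neg, sub_eq_add_neg] using this
  have htc : (t:ℝ) * c ≤ 1 / 2 := by
    rw [hc]
    rw [mul_one_div, div_le_div_iff₀ (by positivity) (by norm_num)]
    linarith
  have hhalf : (1:ℝ)/2 ≤ ∏ k : Fin t, (1 - α k * ζ) := by
    calc (1:ℝ)/2 ≤ 1 - (t:ℝ)*c := by linarith
      _ ≤ (1 - c) ^ t := hbern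
      _ ≤ _ := hprod
  calc L / (4 * ((t:ℝ) + 1)) = ζ * (1/2) := by rw [hζ]; field_simp; ring_nf
    _ ≤ ζ * ∏ k : Fin t, (1 - α k * ζ) :=
        mul_le_mul_of_nonneg_left hhalf hζpos.le
  done
end

section
/- Let L > 0 and let p be a real polynomial of degree at most t with p(0) = 1. Then the maximum over ζ ∈ [0, L] of |ζ · p(ζ)| is at least L/(2(t+1)²). -/
open Real Finset

lemma my_sin_ge_sub_cube {x : ℝ} (hx : 0 ≤ x) : x - x^3/6 ≤ Real.sin x := by
  have h : ∀ y : ℝ, 0 ≤ deriv (fun z => Real.sin z - z + z^3/6) y := by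
    intro y
    have hd : deriv (fun z => Real.sin z - z + z^3/6) y = Real.cos y - 1 + y^2/2 := by
      have h1 : HasDerivAt (fun z : ℝ => Real.sin z - z + z^3/6) (Real.cos y - 1 + (3*y^2)/6) y := by
        have := ((Real.hasDerivAt_sin y).sub (hasDerivAt_id y)).add
          (((hasDerivAt_pow 3 y).div_const 6))
        simp at this
        exact this.congr_of_eventuallyEq (Filter.Eventually.of_forall fun _ => rfl)
      rw [h1.deriv]; ring
    rw [hd]
    nlinarith [Real.one_sub_sq_div_two_le_cos (x := y)]
  have hm : Monotone (fun z => Real.sin z - z + z^3/6) := by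
    apply monotone_of_deriv_nonneg
    · fun_prop
    · exact h
  have := hm hx
  simp at this
  nlinarith [this]

lemma my_csc_sq_le {x : ℝ} (hx : 0 < x) (hx' : x ≤ π/2) :
    1 / Real.sin x ^ 2 ≤ 1 / x^2 + 1 := by
  have hsinpos : 0 < Real.sin x := Real.sin_pos_of_pos_of_lt_pi hx (lt_of_le_of_lt hx' (by linarith [Real.pi_pos]))
  have hj : 2/π * x ≤ Real.sin x := Real.mul_le_sin hx.le hx'
  have hpi : π ≤ 3.15 := by linarith [Real.pi_lt_d2]
  have hpi2 : 3.14 ≤ π := by linarith [Real.pi_gt_d2]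
  -- sin² ≥ x²/3
  have hs3 : x^2/3 ≤ Real.sin x ^ 2 := by
    have h1 : (2/π) * x ≥ (2/3.15) * x := by
      apply mul_le_mul_of_nonneg_right _ hx.le
      rw [div_le_div_iff₀ (by norm_num) (by linarith [Real.pi_pos])]
      nlinarith
    nlinarith [sq_nonneg x]
  -- x² − sin²x ≤ x⁴/3
  have hsinle : Real.sin x ≤ x := Real.sin_le hx.le
  have hge : x - x^3/6 ≤ Real.sin x := my_sin_ge_sub_cube hx.le
  have hdiff : x^2 - Real.sin x ^ 2 ≤ x^4/3 := by nlinarith [hsinle, hge, hx.le]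
  rw [div_add' _ _ _ (by positivity), div_le_div_iff₀ (by positivity) (by positivity)]
  nlinarith [hs3, hdiff, sq_nonneg x, hsinpos]


lemma my_sum_inv_sq_le : ∀ m : ℕ, 1 ≤ m → ∑ i ∈ Finset.Icc 1 m, (1:ℝ)/(i:ℝ)^2 ≤ 2 - 1/m := by
  intro m
  induction m with
  | zero => intro h; omega
  | succ k ih =>
    intro _
    rcases Nat.eq_zero_or_pos k with h | h
    · subst h; norm_num
    · have hk : 1 ≤ k := h
      rw [Finset.sum_Icc_succ_top (by omega)]
      have hkR : (1:ℝ) ≤ (k:ℝ) := by exact_mod_cast hk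
      have h2 : (1:ℝ)/((k:ℝ)+1)^2 ≤ 1/(k:ℝ) - 1/((k:ℝ)+1) := by
        rw [div_sub_div _ _ (by positivity) (by positivity)]
        rw [div_le_div_iff₀ (by positivity) (by positivity)]
        ring_nf
        nlinarith
      have := ih hk
      push_cast
      push_cast at this
      linarith

lemma my_csc_sum_le (n : ℕ) (hn : 1 ≤ n)
    (hterm : ∀ i ∈ Finset.Icc 1 (n-1), (1:ℝ)/Real.sin ((i:ℝ)*(π/(2*n)))^2 ≤ 1/((i:ℝ)*(π/(2*n)))^2 + 1) :
    ∑ i ∈ Finset.Icc 1 (n-1), (1:ℝ)/Real.sin ((i:ℝ)*(π/(2*n)))^2 ≤ (n:ℝ)^2 - 1 := by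
  rcases Nat.eq_or_lt_of_le hn with h | h
  · rw [← h]; norm_num
  · have hn2 : 2 ≤ n := h
    have hpi : (3.14:ℝ) ≤ π := by linarith [Real.pi_gt_d2]
    have hpi0 : (0:ℝ) < π := by linarith
    have hN : (2:ℝ) ≤ (n:ℝ) := by exact_mod_cast hn2
    calc ∑ i ∈ Finset.Icc 1 (n-1), (1:ℝ)/Real.sin ((i:ℝ)*(π/(2*n)))^2
        ≤ ∑ i ∈ Finset.Icc 1 (n-1), ((4*(n:ℝ)^2/π^2) * (1/(i:ℝ)^2) + 1) := by
          apply Finset.sum_le_sum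
          intro i hi
          refine (hterm i hi).trans ?_
          have hi1 : 1 ≤ i := (Finset.mem_Icc.mp hi).1
          have hiR : (1:ℝ) ≤ (i:ℝ) := by exact_mod_cast hi1
          have : (1:ℝ)/((i:ℝ)*(π/(2*n)))^2 = (4*(n:ℝ)^2/π^2) * (1/(i:ℝ)^2) := by
            field_simp
            ring
          rw [this]
      _ = (4*(n:ℝ)^2/π^2) * (∑ i ∈ Finset.Icc 1 (n-1), 1/(i:ℝ)^2) + ((n:ℕ)-1 : ℕ) := by
          rw [Finset.sum_add_distrib, ← Finset.mul_sum]
          simp [Nat.card_Icc]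
      _ ≤ (n:ℝ)^2 - 1 := by
          have hsum := my_sum_inv_sq_le (n-1) (by omega)
          have hc : ((n:ℕ)-1 : ℕ) = (n:ℝ)-1 := by
            have : 1 ≤ n := hn
            push_cast [Nat.cast_sub this]
            ring
          rw [hc]
          have hsum' : ∑ i ∈ Finset.Icc 1 (n-1), (1:ℝ)/(i:ℝ)^2 ≤ 2 - 1/((n:ℝ)-1) := by
            have : (((n-1:ℕ)):ℝ) = (n:ℝ)-1 := by
              push_cast [Nat.cast_sub (show 1 ≤ n from hn)]; ring
            rw [← this]
            exact hsum
          have hsum0 : (0:ℝ) ≤ ∑ i ∈ Finset.Icc 1 (n-1), (1:ℝ)/(i:ℝ)^2 :=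
            Finset.sum_nonneg (fun i _ => by positivity)
          have hpisq : (9.8596:ℝ) ≤ π^2 := by nlinarith
          have hkey : 4*(n:ℝ)*(2*(n:ℝ)-3) ≤ ((n:ℝ)-1)^2*π^2 := by
            nlinarith [sq_nonneg ((n:ℝ) - 2.08), sq_nonneg ((n:ℝ)-1)]
          have hfac : (0:ℝ) < 4*(n:ℝ)^2/π^2 := by positivity
          have h1 : (4*(n:ℝ)^2/π^2) * (∑ i ∈ Finset.Icc 1 (n-1), 1/(i:ℝ)^2)
              ≤ (4*(n:ℝ)^2/π^2) * (2 - 1/((n:ℝ)-1)) := by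
            apply mul_le_mul_of_nonneg_left hsum' hfac.le
          have h2 : (4*(n:ℝ)^2/π^2) * (2 - 1/((n:ℝ)-1)) ≤ (n:ℝ)^2 - (n:ℝ) := by
            have hn1 : (0:ℝ) < (n:ℝ)-1 := by linarith
            have e1 : (4*(n:ℝ)^2/π^2)*(2 - 1/((n:ℝ)-1)) = (4*(n:ℝ)^2*(2*(n:ℝ)-3))/(π^2*((n:ℝ)-1)) := by
              field_simp
              ring
            rw [e1, div_le_iff₀ (by positivity)]
            nlinarith [mul_le_mul_of_nonneg_left hkey (show (0:ℝ) ≤ (n:ℝ) by linarith)]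
          linarith


noncomputable def mkQ (n d : ℕ) : ℝ := Real.sin ((d:ℝ) * (π/(2*n)))
noncomputable def mkC (n d : ℕ) : ℝ := Real.cos ((d:ℝ) * (π/(2*n)))
noncomputable def mkP (n a m : ℕ) : ℝ := ∏ d ∈ Finset.range m, mkQ n (a+d)
noncomputable def mkCC (n m : ℕ) : ℝ := ∏ d ∈ Finset.range m, mkC n (1+d)

section lems
variable {n : ℕ} (hn : 1 ≤ n)

lemma theta_pos (hn : 1 ≤ n) : 0 < π/(2*n) := by
  apply div_pos Real.pi_pos
  positivity

lemma mkQ_pos (hn : 1 ≤ n) {d : ℕ} (h1 : 1 ≤ d) (h2 : d ≤ 2*n - 1) : 0 < mkQ n d := by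
  have ht := theta_pos hn
  apply Real.sin_pos_of_pos_of_lt_pi
  · have : (1:ℝ) ≤ (d:ℝ) := by exact_mod_cast h1
    nlinarith
  · have hd : (d:ℝ) < 2*n := by
      have : d < 2*n := by omega
      exact_mod_cast this
    have hne : (2*(n:ℝ)) ≠ 0 := by positivity
    calc (d:ℝ) * (π/(2*n)) < (2*n) * (π/(2*n)) := by
          apply mul_lt_mul_of_pos_right hd ht
      _ = π := by field_simp
lemma mkC_pos (hn : 1 ≤ n) {d : ℕ} (h2 : d ≤ n - 1) : 0 < mkC n d := by
  have ht := theta_pos hn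
  apply Real.cos_pos_of_mem_Ioo
  constructor
  · have : (0:ℝ) ≤ (d:ℝ) * (π/(2*n)) := by positivity
    have := Real.pi_pos
    linarith
  · have hd : (d:ℝ) < (n:ℝ) := by exact_mod_cast (by omega : d < n)
    have hne : ((n:ℝ)) ≠ 0 := by positivity
    calc (d:ℝ) * (π/(2*n)) < (n:ℝ) * (π/(2*n)) := by
          apply mul_lt_mul_of_pos_right hd ht
      _ = π/2 := by field_simp

lemma mkC_zero : mkC n 0 = 1 := by simp [mkC]

lemma mkQ_n_add (hn : 1 ≤ n) (e : ℕ) : mkQ n (n + e) = mkC n e := by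
  unfold mkQ mkC
  have hne : ((n:ℝ)) ≠ 0 := by positivity
  have : ((n:ℝ) + e) * (π/(2*n)) = π/2 + (e:ℝ) * (π/(2*n)) := by field_simp
  push_cast
  rw [this]
  simp [Real.sin_add]

lemma mkQ_n_sub (hn : 1 ≤ n) {e : ℕ} (he : e ≤ n) : mkQ n (n - e) = mkC n e := by
  unfold mkQ mkC
  have hne : ((n:ℝ)) ≠ 0 := by positivity
  have hc : (((n-e:ℕ)):ℝ) = (n:ℝ) - e := by
    push_cast [Nat.cast_sub he]; ring
  rw [hc]
  have : ((n:ℝ) - e) * (π/(2*n)) = π/2 - (e:ℝ) * (π/(2*n)) := by field_simp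
  rw [this, Real.sin_pi_div_two_sub]

lemma mkQ_two_mul (d : ℕ) : mkQ n (2*d) = 2 * mkQ n d * mkC n d := by
  unfold mkQ mkC
  push_cast
  rw [show ((2:ℝ)*d) * (π/(2*n)) = 2*((d:ℝ)*(π/(2*n))) by ring, Real.sin_two_mul]

lemma mkQ_self (hn : 1 ≤ n) : mkQ n n = 1 := by
  unfold mkQ
  have hne : ((n:ℝ)) ≠ 0 := by positivity
  rw [show ((n:ℝ)) * (π/(2*n)) = π/2 by field_simp, Real.sin_pi_div_two]

lemma mkP_pos (hn : 1 ≤ n) {a m : ℕ} (ha : 1 ≤ a) (hm : a + m ≤ 2*n) : 0 < mkP n a m := by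
  apply Finset.prod_pos
  intro d hd
  have hd' := Finset.mem_range.mp hd
  exact mkQ_pos hn (by omega) (by omega)

lemma mkP_split (a m₁ m₂ : ℕ) : mkP n a (m₁ + m₂) = mkP n a m₁ * mkP n (a + m₁) m₂ := by
  unfold mkP
  rw [Finset.prod_range_add]
  congr 1
  apply Finset.prod_congr rfl
  intro d _
  congr 1
  omega

lemma mkP_one (a : ℕ) : mkP n a 1 = mkQ n a := by simp [mkP]

lemma mkP_zero (a : ℕ) : mkP n a 0 = 1 := by simp [mkP]

end lems

section main
open Finset
variable {n : ℕ}

lemma sin_sq_sub' (a b : ℝ) : Real.sin a ^2 - Real.sin b^2 = Real.sin (a+b) * Real.sin (a-b) := by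
  rw [Real.sin_add, Real.sin_sub]
  have ha := Real.sin_sq_add_cos_sq a
  have hb := Real.sin_sq_add_cos_sq b
  nlinarith [ha, hb]

lemma mkQ_sq_sub {i k : ℕ} (hk : k ≤ i) :
    (mkQ n i)^2 - (mkQ n k)^2 = mkQ n (i+k) * mkQ n (i-k) := by
  unfold mkQ
  have hc : (((i-k:ℕ)):ℝ) = (i:ℝ) - k := by push_cast [Nat.cast_sub hk]; ring
  push_cast [hc]
  rw [show ((i:ℝ)+k)*(π/(2*n)) = (i:ℝ)*(π/(2*n)) + (k:ℝ)*(π/(2*n)) by ring,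
      show ((i:ℝ)-k)*(π/(2*n)) = (i:ℝ)*(π/(2*n)) - (k:ℝ)*(π/(2*n)) by ring]
  exact sin_sq_sub' _ _

lemma prod_mkQ_reflect (c m : ℕ) (h : m ≤ c) :
    (∏ d ∈ range m, mkQ n (c - d)) = mkP n (c - m + 1) m := by
  unfold mkP
  rw [← Finset.prod_range_reflect (fun d => mkQ n (c - m + 1 + d)) m]
  apply Finset.prod_congr rfl
  intro d hd
  have hdm := Finset.mem_range.mp hd
  congr 1
  omega

lemma mkCC_pos (hn : 1 ≤ n) {m : ℕ} (hm : m ≤ n - 1) : 0 < mkCC n m := by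
  apply Finset.prod_pos
  intro d hd
  have := Finset.mem_range.mp hd
  exact mkC_pos hn (by omega)

lemma mkP_eq_mkCC (hn : 1 ≤ n) (i : ℕ) : mkP n (n+1) i = mkCC n i := by
  unfold mkP mkCC
  apply Finset.prod_congr rfl
  intro d _
  rw [show n+1+d = n + (1+d) by omega]
  exact mkQ_n_add hn _

lemma mkP_reflect_mkCC (hn : 1 ≤ n) {i : ℕ} (hi1 : 1 ≤ i) (hin : i ≤ n) :
    mkP n (n-i+1) i = mkCC n (i-1) := by
  have h1 : mkP n (n-i+1) i = ∏ d ∈ range i, mkQ n (n - d) := (prod_mkQ_reflect n i hin).symm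
  rw [h1]
  have h2 : ∀ d ∈ range i, mkQ n (n - d) = mkC n d := by
    intro d hd
    exact mkQ_n_sub hn (by have := Finset.mem_range.mp hd; omega)
  rw [Finset.prod_congr rfl h2]
  have h : i = (i-1)+1 := by omega
  conv_lhs => rw [h, Finset.prod_range_succ']
  unfold mkCC
  rw [mkC_zero, mul_one]
  apply Finset.prod_congr rfl
  intro d _
  congr 1
  omega

lemma mkCC_succ {i : ℕ} (hi : 1 ≤ i) : mkCC n i = mkCC n (i-1) * mkC n i := by
  have h : i = (i-1)+1 := by omega
  unfold mkCC
  conv_lhs => rw [h, Finset.prod_range_succ]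
  congr 2
  omega

lemma erase_split_prod (f : ℕ → ℝ) {i : ℕ} (hi1 : 1 ≤ i) (hin : i ≤ n) :
    ∏ k ∈ (Finset.Icc 1 n).erase i, f k
      = (∏ d ∈ range (i-1), f (1+d)) * (∏ d ∈ range (n-i), f (i+1+d)) := by
  have hset : (Finset.Icc 1 n).erase i = Finset.Ico 1 i ∪ Finset.Ico (i+1) (n+1) := by
    ext x
    simp only [Finset.mem_erase, Finset.mem_Icc, Finset.mem_union, Finset.mem_Ico]
    omega
  have hdisj : Disjoint (Finset.Ico 1 i) (Finset.Ico (i+1) (n+1)) := by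
    apply Finset.disjoint_left.mpr
    intro x hx hx'
    simp only [Finset.mem_Ico] at hx hx'
    omega
  rw [hset, Finset.prod_union hdisj, Finset.prod_Ico_eq_prod_range, Finset.prod_Ico_eq_prod_range,
    show n+1-(i+1) = n-i from by omega]

lemma prodQ_erase (hn : 1 ≤ n) {i : ℕ} (hi1 : 1 ≤ i) (hin : i ≤ n) :
    ∏ k ∈ (Finset.Icc 1 n).erase i, mkQ n k = mkP n 1 (i-1) * mkP n (i+1) (n-i) := by
  rw [erase_split_prod (mkQ n) hi1 hin]
  rfl

lemma den_eq (hn : 1 ≤ n) {i : ℕ} (hi1 : 1 ≤ i) (hin : i ≤ n) :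
    ∏ k ∈ (Finset.Icc 1 n).erase i, |(mkQ n i)^2 - (mkQ n k)^2|
      = (mkP n (i+1) (i-1) * mkP n 1 (i-1)) * (mkP n (2*i+1) (n-i) * mkP n 1 (n-i)) := by
  rw [erase_split_prod (fun k => |(mkQ n i)^2 - (mkQ n k)^2|) hi1 hin]
  congr 1
  · have hpt : ∀ d ∈ range (i-1), |(mkQ n i)^2 - (mkQ n (1+d))^2|
        = mkQ n (i+1+d) * mkQ n (i-1-d) := by
      intro d hd
      have hdm := Finset.mem_range.mp hd
      have heq : (mkQ n i)^2 - (mkQ n (1+d))^2 = mkQ n (i+(1+d)) * mkQ n (i-(1+d)) :=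
        mkQ_sq_sub (by omega)
      rw [heq, abs_of_pos, show i+(1+d) = i+1+d by omega, show i-(1+d) = i-1-d by omega]
      apply mul_pos
      · exact mkQ_pos hn (by omega) (by omega)
      · exact mkQ_pos hn (by omega) (by omega)
    have hrefl : (∏ d ∈ range (i-1), mkQ n (i-1-d)) = mkP n 1 (i-1) := by
      have := prod_mkQ_reflect (n := n) (i-1) (i-1) le_rfl
      simpa using this
    rw [Finset.prod_congr rfl hpt, Finset.prod_mul_distrib, hrefl]
    rfl
  · have hpt : ∀ d ∈ range (n-i), |(mkQ n i)^2 - (mkQ n (i+1+d))^2|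
        = mkQ n (2*i+1+d) * mkQ n (1+d) := by
      intro d hd
      have hdm := Finset.mem_range.mp hd
      have heq : (mkQ n (i+1+d))^2 - (mkQ n i)^2 = mkQ n ((i+1+d)+i) * mkQ n ((i+1+d)-i) :=
        mkQ_sq_sub (by omega)
      rw [abs_sub_comm, heq, abs_of_pos, show (i+1+d)+i = 2*i+1+d by omega,
          show (i+1+d)-i = 1+d by omega]
      apply mul_pos
      · exact mkQ_pos hn (by omega) (by omega)
      · exact mkQ_pos hn (by omega) (by omega)
    rw [Finset.prod_congr rfl hpt, Finset.prod_mul_distrib]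
    rfl

end main

section assembly
variable {n : ℕ}

lemma den_interior (hn : 1 ≤ n) {i : ℕ} (hi1 : 1 ≤ i) (hin : i ≤ n-1) :
    (mkP n (i+1) (i-1) * mkP n 1 (i-1)) * (mkP n (2*i+1) (n-i) * mkP n 1 (n-i))
      = (mkP n 1 n)^2 / (2*(mkQ n i)^2) := by
  have hn2 : 2 ≤ n := by omega
  have hq : 0 < mkQ n i := mkQ_pos hn hi1 (by omega)
  have hc : 0 < mkC n i := mkC_pos hn (by omega)
  have hP : 0 < mkP n 1 n := mkP_pos hn le_rfl (by omega)
  have hD : 0 < mkP n 1 (n-i) := mkP_pos hn le_rfl (by omega)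
  have hG : 0 < mkCC n (i-1) := mkCC_pos hn (by omega)
  -- split identities
  have split1 : mkP n (i+1) n = mkP n (i+1) (i-1) * (mkQ n (2*i) * mkP n (2*i+1) (n-i)) := by
    have h1 : mkP n (i+1) n = mkP n (i+1) ((i-1) + (1 + (n-i))) := by congr 1; omega
    rw [h1, mkP_split, mkP_split, mkP_one, show i+1+(i-1) = 2*i from by omega]
  have split2 : mkP n (i+1) n = mkP n (i+1) (n-i) * mkCC n i := by
    have h1 : mkP n (i+1) n = mkP n (i+1) ((n-i) + i) := by congr 1; omega
    rw [h1, mkP_split, show i+1+(n-i) = n+1 from by omega, mkP_eq_mkCC hn]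
  have eq1 : mkP n (i+1) (i-1) * (mkQ n (2*i) * mkP n (2*i+1) (n-i))
      = mkP n (i+1) (n-i) * (mkCC n (i-1) * mkC n i) := by
    rw [← split1, split2, ← mkCC_succ hi1]
  have eq2 : mkP n 1 n = mkP n 1 (i-1) * (mkQ n i * mkP n (i+1) (n-i)) := by
    have h1 : mkP n 1 n = mkP n 1 ((i-1) + (1 + (n-i))) := by congr 1; omega
    rw [h1, mkP_split, mkP_split, mkP_one, show 1+(i-1) = i from by omega]
  have eq3 : mkP n 1 n = mkP n 1 (n-i) * mkCC n (i-1) := by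
    have h1 : mkP n 1 n = mkP n 1 ((n-i) + i) := by congr 1; omega
    rw [h1, mkP_split, show 1+(n-i) = n-i+1 from by omega, mkP_reflect_mkCC hn hi1 (by omega)]
  have eq4 : mkQ n (2*i) = 2 * mkQ n i * mkC n i := mkQ_two_mul i
  have h1 : 2 * mkQ n i * (mkP n (i+1) (i-1) * mkP n (2*i+1) (n-i))
      = mkP n (i+1) (n-i) * mkCC n (i-1) := by
    have hcc : (2 * mkQ n i * (mkP n (i+1) (i-1) * mkP n (2*i+1) (n-i))) * mkC n i
        = (mkP n (i+1) (n-i) * mkCC n (i-1)) * mkC n i := by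
      linear_combination eq1 - (mkP n (i+1) (i-1) * mkP n (2*i+1) (n-i)) * eq4
    exact mul_right_cancel₀ hc.ne' hcc
  rw [eq_div_iff (by positivity)]
  linear_combination (mkQ n i * mkP n 1 (i-1) * mkP n 1 (n-i)) * h1
    - (mkP n 1 (n-i) * mkCC n (i-1)) * eq2 - (mkP n 1 n) * eq3

lemma mkP_top_pred (hn : 1 ≤ n) : mkP n 1 n = mkP n 1 (n-1) := by
  have h4 : mkP n 1 n = mkP n 1 ((n-1)+1) := by congr 1; omega
  rw [h4, mkP_split, mkP_one, show 1+(n-1) = n from by omega, mkQ_self hn, mul_one]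

lemma den_top (hn : 1 ≤ n) :
    mkP n (n+1) (n-1) * mkP n 1 (n-1) = (mkP n 1 n)^2 := by
  have h1 : mkP n (n+1) (n-1) = mkCC n (n-1) := mkP_eq_mkCC hn _
  have h2 : mkP n 1 n = mkCC n (n-1) := by
    have h := mkP_reflect_mkCC hn (i := n) hn le_rfl
    rw [Nat.sub_self] at h
    simpa using h
  rw [h1, ← h2, mkP_top_pred hn, sq]

end assembly

section lagrange
open Polynomial
variable {n : ℕ}

noncomputable def mkV (n : ℕ) (L : ℝ) (k : ℕ) : ℝ := L * (mkQ n k)^2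

lemma mkV_zero (L : ℝ) : mkV n L 0 = 0 := by
  unfold mkV mkQ
  simp

lemma mkV_pos (hn : 1 ≤ n) {L : ℝ} (hL : 0 < L) {k : ℕ} (h1 : 1 ≤ k) (h2 : k ≤ n) :
    0 < mkV n L k := by
  have := mkQ_pos hn h1 (by omega)
  unfold mkV
  positivity

lemma mkV_mem (hn : 1 ≤ n) {L : ℝ} (hL : 0 < L) (k : ℕ) : mkV n L k ∈ Set.Icc 0 L := by
  unfold mkV mkQ
  constructor
  · positivity
  · nlinarith [Real.sin_sq_le_one ((k:ℝ) * (π/(2*(n:ℝ))))]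

lemma mkQ_lt (hn : 1 ≤ n) {j k : ℕ} (hjk : j < k) (hk : k ≤ n) : mkQ n j < mkQ n k := by
  have ht := theta_pos hn
  have hpi := Real.pi_pos
  apply Real.strictMonoOn_sin
  · constructor
    · have : (0:ℝ) ≤ (j:ℝ) * (π/(2*n)) := by positivity
      linarith
    · have hj : (j:ℝ) ≤ (n:ℝ) := by exact_mod_cast (by omega : j ≤ n)
      have hne : ((n:ℝ)) ≠ 0 := by positivity
      calc (j:ℝ) * (π/(2*n)) ≤ (n:ℝ) * (π/(2*n)) := by
            apply mul_le_mul_of_nonneg_right hj ht.le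
        _ = π/2 := by field_simp
  · constructor
    · have : (0:ℝ) ≤ (k:ℝ) * (π/(2*n)) := by positivity
      linarith
    · have hj : (k:ℝ) ≤ (n:ℝ) := by exact_mod_cast hk
      have hne : ((n:ℝ)) ≠ 0 := by positivity
      calc (k:ℝ) * (π/(2*n)) ≤ (n:ℝ) * (π/(2*n)) := by
            apply mul_le_mul_of_nonneg_right hj ht.le
        _ = π/2 := by field_simp
  · have hjk' : (j:ℝ) < (k:ℝ) := by exact_mod_cast hjk
    apply mul_lt_mul_of_pos_right hjk' ht

lemma mkQ_nonneg (hn : 1 ≤ n) {k : ℕ} (hk : k ≤ n) : 0 ≤ mkQ n k := by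
  rcases Nat.eq_zero_or_pos k with h | h
  · subst h; unfold mkQ; simp
  · exact (mkQ_pos hn h (by omega)).le

lemma mkV_injOn (hn : 1 ≤ n) {L : ℝ} (hL : 0 < L) :
    Set.InjOn (mkV n L) (Finset.range (n+1)) := by
  have key : ∀ j k : ℕ, j < k → k ≤ n → mkV n L j < mkV n L k := by
    intro j k hjk hk
    have h1 := mkQ_lt hn hjk hk
    have h2 := mkQ_nonneg hn (show j ≤ n by omega)
    have h3 : 0 < mkQ n j + mkQ n k := by linarith [lt_of_le_of_lt h2 h1]
    have h4 := mul_pos (sub_pos.mpr h1) h3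
    unfold mkV
    nlinarith
  intro j hj k hk hjk
  simp only [Finset.coe_range, Set.mem_Iio] at hj hk
  rcases lt_trichotomy j k with h | h | h
  · exact absurd hjk (ne_of_lt (key j k h (by omega)))
  · exact h
  · exact absurd hjk.symm (ne_of_lt (key k j h (by omega)))


lemma mkP_split_at (hn : 1 ≤ n) {i : ℕ} (hi1 : 1 ≤ i) (hin : i ≤ n) :
    mkP n 1 n = mkP n 1 (i-1) * (mkQ n i * mkP n (i+1) (n-i)) := by
  have h1 : mkP n 1 n = mkP n 1 ((i-1) + (1 + (n-i))) := by congr 1; omega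
  rw [h1, mkP_split, mkP_split, mkP_one, show 1+(i-1) = i from by omega]

lemma abs_B_le (hn : 1 ≤ n) {L : ℝ} (hL : 0 < L) {i : ℕ} (hi1 : 1 ≤ i) (hin : i ≤ n) :
    |Polynomial.eval 0 (Polynomial.derivative (Lagrange.basis (Finset.range (n+1)) (mkV n L) i))|
      ≤ 2 / (L * (mkQ n i)^2) := by
  have h0mem : (0:ℕ) ∈ (Finset.range (n+1)).erase i := by
    simp only [Finset.mem_erase, Finset.mem_range]
    omega
  have hbasis : Lagrange.basis (Finset.range (n+1)) (mkV n L) i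
      = Lagrange.basisDivisor (mkV n L i) (mkV n L 0)
        * ∏ j ∈ ((Finset.range (n+1)).erase i).erase 0,
            Lagrange.basisDivisor (mkV n L i) (mkV n L j) :=
    (Finset.mul_prod_erase _ _ h0mem).symm
  have hdiv0 : Lagrange.basisDivisor (mkV n L i) (mkV n L 0)
      = Polynomial.C (mkV n L i)⁻¹ * Polynomial.X := by
    rw [mkV_zero]
    unfold Lagrange.basisDivisor
    simp
  have hEset : ((Finset.range (n+1)).erase i).erase 0 = (Finset.Icc 1 n).erase i := by
    ext x
    simp only [Finset.mem_erase, Finset.mem_range, Finset.mem_Icc]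
    omega
  rw [hbasis, hdiv0, hEset]
  set Q := ∏ j ∈ (Finset.Icc 1 n).erase i, Lagrange.basisDivisor (mkV n L i) (mkV n L j) with hQ
  have heval : Polynomial.eval 0 (Polynomial.derivative (Polynomial.C (mkV n L i)⁻¹ * Polynomial.X * Q))
      = (mkV n L i)⁻¹ * Polynomial.eval 0 Q := by
    rw [Polynomial.derivative_mul, Polynomial.derivative_mul]
    simp
  rw [heval]
  have hQeval : Polynomial.eval 0 Q
      = ∏ j ∈ (Finset.Icc 1 n).erase i, ((mkV n L i - mkV n L j)⁻¹ * (0 - mkV n L j)) := by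
    rw [hQ, Polynomial.eval_prod]
    apply Finset.prod_congr rfl
    intro j _
    unfold Lagrange.basisDivisor
    simp
  rw [hQeval, abs_mul, abs_prod]
  have hvi : 0 < mkV n L i := mkV_pos hn hL hi1 hin
  have hq : 0 < mkQ n i := mkQ_pos hn hi1 (by omega)
  have hP : 0 < mkP n 1 n := mkP_pos hn le_rfl (by omega)
  have hpt : ∀ j ∈ (Finset.Icc 1 n).erase i,
      |(mkV n L i - mkV n L j)⁻¹ * (0 - mkV n L j)|
        = mkV n L j * |mkV n L i - mkV n L j|⁻¹ := by
    intro j hj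
    rw [Finset.mem_erase, Finset.mem_Icc] at hj
    have hvj : 0 < mkV n L j := mkV_pos hn hL hj.2.1 hj.2.2
    rw [abs_mul, abs_inv, abs_of_neg (by linarith : (0:ℝ) - mkV n L j < 0)]
    ring
  rw [Finset.prod_congr rfl hpt, Finset.prod_mul_distrib, Finset.prod_inv_distrib]
  have hcard : ((Finset.Icc 1 n).erase i).card = n - 1 := by
    rw [Finset.card_erase_of_mem (by rw [Finset.mem_Icc]; omega), Nat.card_Icc]
    omega
  have hNum : ∏ j ∈ (Finset.Icc 1 n).erase i, mkV n L j
      = L^(n-1) * (mkP n 1 (i-1) * mkP n (i+1) (n-i))^2 := by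
    unfold mkV
    rw [Finset.prod_mul_distrib, Finset.prod_const, hcard, Finset.prod_pow,
        prodQ_erase hn hi1 hin]
  have hDen : ∏ j ∈ (Finset.Icc 1 n).erase i, |mkV n L i - mkV n L j|
      = L^(n-1) * ∏ j ∈ (Finset.Icc 1 n).erase i, |(mkQ n i)^2 - (mkQ n j)^2| := by
    have hpt2 : ∀ j ∈ (Finset.Icc 1 n).erase i,
        |mkV n L i - mkV n L j| = L * |(mkQ n i)^2 - (mkQ n j)^2| := by
      intro j _
      unfold mkV
      rw [show L * mkQ n i ^2 - L * mkQ n j^2 = L * ((mkQ n i)^2 - (mkQ n j)^2) from by ring,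
          abs_mul, abs_of_pos hL]
    rw [Finset.prod_congr rfl hpt2, Finset.prod_mul_distrib, Finset.prod_const, hcard]
  rw [hNum, hDen, den_eq hn hi1 hin]
  have hLp : (0:ℝ) < L^(n-1) := by positivity
  have habsvi : |(mkV n L i)⁻¹| = (L * (mkQ n i)^2)⁻¹ := by
    rw [abs_inv, abs_of_pos hvi]
    rfl
  rw [habsvi]
  rcases Nat.lt_or_ge i n with hcase | hcase
  · -- interior
    have hint := den_interior hn hi1 (by omega : i ≤ n - 1)
    rw [hint]
    have heq2 := mkP_split_at hn hi1 hin
    have hBEq : (mkP n 1 (i-1) * mkP n (i+1) (n-i)) * mkQ n i = mkP n 1 n := by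
      linear_combination -heq2
    have hE : 0 < mkP n (i+1) (n-i) := mkP_pos hn (by omega) (by omega)
    have hB : 0 < mkP n 1 (i-1) := mkP_pos hn le_rfl (by omega)
    apply le_of_eq
    have hsq : (mkP n 1 (i-1) * mkP n (i+1) (n-i))^2 * (mkQ n i)^2 = (mkP n 1 n)^2 := by
      linear_combination ((mkP n 1 (i-1) * mkP n (i+1) (n-i)) * mkQ n i + mkP n 1 n) * hBEq
    field_simp
    linear_combination hsq
  · -- i = n
    have hieq : i = n := by omega
    subst hieq
    rw [Nat.sub_self]
    simp only [mkP_zero, mul_one, one_mul]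
    rw [den_top hn, ← mkP_top_pred hn]
    rw [mul_inv_cancel₀ (show (L^(i-1) * mkP i 1 i ^ 2) ≠ 0 from by positivity), mul_one]
    rw [mkQ_self hn, one_pow, mul_one]
    have hinv := inv_pos.mpr hL
    rw [div_eq_mul_inv]
    linarith

end lagrange

section final
open Polynomial
variable {n : ℕ}

lemma sum_abs_B_le (hn : 1 ≤ n) {L : ℝ} (hL : 0 < L) :
    ∑ i ∈ Finset.Icc 1 n,
        |Polynomial.eval 0 (Polynomial.derivative (Lagrange.basis (Finset.range (n+1)) (mkV n L) i))|
      ≤ 2*(n:ℝ)^2/L := by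
  have step1 : ∑ i ∈ Finset.Icc 1 n,
        |Polynomial.eval 0 (Polynomial.derivative (Lagrange.basis (Finset.range (n+1)) (mkV n L) i))|
      ≤ ∑ i ∈ Finset.Icc 1 n, 2 / (L * (mkQ n i)^2) := by
    apply Finset.sum_le_sum
    intro i hi
    rw [Finset.mem_Icc] at hi
    exact abs_B_le hn hL hi.1 hi.2
  refine step1.trans ?_
  have hsplit : ∑ i ∈ Finset.Icc 1 n, 2 / (L * (mkQ n i)^2)
      = (∑ i ∈ Finset.Icc 1 (n-1), 2 / (L * (mkQ n i)^2)) + 2 / (L * (mkQ n n)^2) := by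
    have h1 : n = (n-1)+1 := by omega
    conv_lhs => rw [h1]
    rw [Finset.sum_Icc_succ_top (by omega : 1 ≤ (n-1)+1)]
    rw [← h1]
  rw [hsplit, mkQ_self hn]
  have hterm : ∀ i ∈ Finset.Icc 1 (n-1),
      (1:ℝ)/Real.sin ((i:ℝ)*(π/(2*n)))^2 ≤ 1/((i:ℝ)*(π/(2*n)))^2 + 1 := by
    intro i hi
    rw [Finset.mem_Icc] at hi
    have ht := theta_pos hn
    have hipos : (0:ℝ) < (i:ℝ) := by exact_mod_cast (by omega : 0 < i)
    apply my_csc_sq_le (by positivity)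
    have hi2 : (i:ℝ) ≤ (n:ℝ) := by exact_mod_cast (by omega : i ≤ n)
    have hne : ((n:ℝ)) ≠ 0 := by positivity
    calc (i:ℝ) * (π/(2*n)) ≤ (n:ℝ) * (π/(2*n)) := by
          apply mul_le_mul_of_nonneg_right hi2 ht.le
      _ = π/2 := by field_simp
  have hcsc := my_csc_sum_le n hn hterm
  have hrw : ∑ i ∈ Finset.Icc 1 (n-1), 2 / (L * (mkQ n i)^2)
      = (2/L) * ∑ i ∈ Finset.Icc 1 (n-1), (1:ℝ)/Real.sin ((i:ℝ)*(π/(2*n)))^2 := by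
    rw [Finset.mul_sum]
    apply Finset.sum_congr rfl
    intro i hi
    rw [Finset.mem_Icc] at hi
    have hq := mkQ_pos hn hi.1 (by omega)
    unfold mkQ at hq ⊢
    field_simp
  rw [hrw]
  have h2 : (2/L) * (∑ i ∈ Finset.Icc 1 (n-1), (1:ℝ)/Real.sin ((i:ℝ)*(π/(2*n)))^2)
      ≤ (2/L)*((n:ℝ)^2-1) := mul_le_mul_of_nonneg_left hcsc (by positivity)
  have h3 : 2/(L*(1:ℝ)^2) = 2/L := by norm_num
  rw [h3]
  have h4 : (2/L)*((n:ℝ)^2-1) + 2/L = 2*(n:ℝ)^2/L := by field_simp; ring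
  linarith

end final

theorem markov_universal_lower_bound (L : ℝ) (hL : 0 < L) (t : ℕ)
    (p : Polynomial ℝ) (hdeg : p.natDegree ≤ t) (hp0 : p.eval 0 = 1) :
    ∃ ζ ∈ Set.Icc (0 : ℝ) L,
      L / (2 * (t + 1) ^ 2) ≤ |ζ * p.eval ζ| := by
  classical
  set n := t + 1 with hn_def
  have hn : 1 ≤ n := by omega
  have hp_ne : p ≠ 0 := by
    intro h
    rw [h] at hp0
    simp at hp0
  set S : Polynomial ℝ := Polynomial.X * p with hS_def
  have hSdeg : S.natDegree ≤ n := by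
    rw [hS_def, Polynomial.natDegree_mul Polynomial.X_ne_zero hp_ne, Polynomial.natDegree_X]
    omega
  have hdeglt : S.degree < ((Finset.range (n+1)).card : ℕ) := by
    rw [Finset.card_range]
    calc S.degree ≤ (S.natDegree : WithBot ℕ) := Polynomial.degree_le_natDegree
      _ ≤ (n : WithBot ℕ) := by exact_mod_cast hSdeg
      _ < ((n+1 : ℕ) : WithBot ℕ) := by exact_mod_cast Nat.lt_succ_self n
  have hinj := mkV_injOn (n := n) hn hL
  have hinterp := Lagrange.eq_interpolate (v := mkV n L) hinj hdeglt
  have hB : Polynomial.eval 0 (Polynomial.derivative S)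
      = ∑ i ∈ Finset.range (n+1), S.eval (mkV n L i)
          * Polynomial.eval 0 (Polynomial.derivative
              (Lagrange.basis (Finset.range (n+1)) (mkV n L) i)) := by
    conv_lhs => rw [hinterp]
    rw [Lagrange.interpolate_apply, Polynomial.derivative_sum, Polynomial.eval_finset_sum]
    apply Finset.sum_congr rfl
    intro i _
    rw [Polynomial.derivative_C_mul, Polynomial.eval_mul, Polynomial.eval_C]
  have hS'0 : Polynomial.eval 0 (Polynomial.derivative S) = 1 := by
    rw [hS_def, Polynomial.derivative_mul, Polynomial.derivative_X]
    simp [hp0]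
  have hzero_term : S.eval (mkV n L 0) = 0 := by
    rw [mkV_zero, hS_def]
    simp
  have h0mem : (0:ℕ) ∈ Finset.range (n+1) := by simp
  have hset0 : (Finset.range (n+1)).erase 0 = Finset.Icc 1 n := by
    ext x
    simp only [Finset.mem_erase, Finset.mem_range, Finset.mem_Icc]
    omega
  have hsum : (1:ℝ) = ∑ i ∈ Finset.Icc 1 n, S.eval (mkV n L i)
      * Polynomial.eval 0 (Polynomial.derivative
          (Lagrange.basis (Finset.range (n+1)) (mkV n L) i)) := by
    rw [← hset0, ← hS'0, hB, ← Finset.add_sum_erase _ _ h0mem, hzero_term, zero_mul, zero_add]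
  obtain ⟨i₀, hi₀mem, hi₀max⟩ := Finset.exists_max_image (Finset.Icc 1 n)
    (fun i => |S.eval (mkV n L i)|) ⟨n, by rw [Finset.mem_Icc]; omega⟩
  have hM0 : 0 ≤ |S.eval (mkV n L i₀)| := abs_nonneg _
  have hbound : (1:ℝ) ≤ |S.eval (mkV n L i₀)| * (2*(n:ℝ)^2/L) := by
    calc (1:ℝ) = |∑ i ∈ Finset.Icc 1 n, S.eval (mkV n L i)
        * Polynomial.eval 0 (Polynomial.derivative
            (Lagrange.basis (Finset.range (n+1)) (mkV n L) i))| := by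
          rw [← hsum]; exact abs_one.symm
      _ ≤ ∑ i ∈ Finset.Icc 1 n, |S.eval (mkV n L i)
        * Polynomial.eval 0 (Polynomial.derivative
            (Lagrange.basis (Finset.range (n+1)) (mkV n L) i))| :=
          Finset.abs_sum_le_sum_abs _ _
      _ ≤ ∑ i ∈ Finset.Icc 1 n, |S.eval (mkV n L i₀)|
          * |Polynomial.eval 0 (Polynomial.derivative
            (Lagrange.basis (Finset.range (n+1)) (mkV n L) i))| := by
          apply Finset.sum_le_sum
          intro i hi
          rw [abs_mul]
          exact mul_le_mul_of_nonneg_right (hi₀max i hi) (abs_nonneg _)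
      _ = |S.eval (mkV n L i₀)| * ∑ i ∈ Finset.Icc 1 n,
          |Polynomial.eval 0 (Polynomial.derivative
            (Lagrange.basis (Finset.range (n+1)) (mkV n L) i))| := by
          rw [Finset.mul_sum]
      _ ≤ |S.eval (mkV n L i₀)| * (2*(n:ℝ)^2/L) :=
          mul_le_mul_of_nonneg_left (sum_abs_B_le hn hL) hM0
  refine ⟨mkV n L i₀, mkV_mem hn hL i₀, ?_⟩
  have hval : mkV n L i₀ * p.eval (mkV n L i₀) = S.eval (mkV n L i₀) := by
    rw [hS_def]
    simp
  rw [hval]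
  have hcast : ((t:ℝ)+1) = (n:ℝ) := by rw [hn_def]; push_cast; ring
  rw [show ((t:ℝ)+1)^2 = (n:ℝ)^2 from by rw [hcast]]
  have hn2pos : (0:ℝ) < 2*(n:ℝ)^2 := by positivity
  rw [div_le_iff₀ hn2pos]
  have h5 : L ≤ |S.eval (mkV n L i₀)| * (2*(n:ℝ)^2) := by
    have := mul_le_mul_of_nonneg_right hbound hL.le
    rw [one_mul] at this
    calc L ≤ |S.eval (mkV n L i₀)| * (2*(n:ℝ)^2/L) * L := this
      _ = |S.eval (mkV n L i₀)| * (2*(n:ℝ)^2) := by field_simp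
  linarith
end

section
/- Let 0 < μ ≤ L and t ∈ ℕ. For any real polynomial p of degree at most t with p(0) = 1, the maximum over ζ ∈ [μ, L] of |p(ζ)| is at least 2/(ρ^t + ρ^{-t}), where ρ = (√κ + 1)/(√κ - 1) and κ = L/μ (assume κ > 1). -/
open Polynomial Real Set

lemma natDegree_T_le : ∀ n : ℕ, (Polynomial.Chebyshev.T ℝ (n : ℤ)).natDegree ≤ n := by
  have H : ∀ n : ℕ, (Polynomial.Chebyshev.T ℝ (n : ℤ)).natDegree ≤ n ∧
      (Polynomial.Chebyshev.T ℝ ((n+1 : ℕ) : ℤ)).natDegree ≤ n + 1 := by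
    intro n
    induction n with
    | zero => constructor <;> simp [Polynomial.Chebyshev.T_zero, Polynomial.Chebyshev.T_one]
    | succ n ih =>
      refine ⟨ih.2, ?_⟩
      have h2 : ((n + 2 : ℕ) : ℤ) = (n : ℤ) + 2 := by push_cast; ring
      rw [h2, Polynomial.Chebyshev.T_add_two]
      refine le_trans (Polynomial.natDegree_sub_le _ _) ?_
      have h1 : (2 * X * Polynomial.Chebyshev.T ℝ ((n : ℤ) + 1)).natDegree ≤ n + 2 := by
        refine le_trans (Polynomial.natDegree_mul_le) ?_
        have : ((n + 1 : ℕ) : ℤ) = (n : ℤ) + 1 := by push_cast; ring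
        have := this ▸ ih.2
        have hX : (2 * X : ℝ[X]).natDegree ≤ 1 := by
          refine le_trans Polynomial.natDegree_mul_le ?_
          simp
        omega
      have h0 : (Polynomial.Chebyshev.T ℝ (n : ℤ)).natDegree ≤ n + 2 := by omega
      simp only [max_le_iff]
      exact ⟨h1, h0⟩
  exact fun n => (H n).1

lemma T_real_cosh (n : ℤ) (x : ℝ) :
    (Polynomial.Chebyshev.T ℝ n).eval (Real.cosh x) = Real.cosh (n * x) := by
  have key : (Complex.ofRealHom ((Polynomial.Chebyshev.T ℝ n).eval (Real.cosh x)) : ℂ)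
      = Complex.ofRealHom (Real.cosh (n * x)) := by
    rw [← Polynomial.eval₂_at_apply, ← Polynomial.eval_map,
      Polynomial.Chebyshev.map_T Complex.ofRealHom n]
    have h1 : (Complex.ofRealHom (Real.cosh x) : ℂ) = Complex.cos ((x : ℂ) * Complex.I) := by
      simp [Complex.cos_mul_I, Complex.ofReal_cosh]
    rw [h1, Polynomial.Chebyshev.T_complex_cos]
    have h2 : (n : ℂ) * ((x : ℂ) * Complex.I) = ((n * x : ℝ) : ℂ) * Complex.I := by
      push_cast; ring
    rw [h2, Complex.cos_mul_I]
    simp [Complex.ofReal_cosh]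
  exact Complex.ofReal_inj.mp key

lemma exists_root_Ioo (r : Polynomial ℝ) {a b : ℝ} (hab : a < b)
    (h : r.eval a * r.eval b < 0) : ∃ x ∈ Set.Ioo a b, r.eval x = 0 := by
  have hc : ContinuousOn (fun x => r.eval x) (Set.Icc a b) := (r.continuous).continuousOn
  rcases mul_neg_iff.mp h with ⟨ha, hb⟩ | ⟨ha, hb⟩
  · obtain ⟨x, hx, hx0⟩ := intermediate_value_Ioo' hab.le hc ⟨hb, ha⟩
    exact ⟨x, hx, hx0⟩
  · obtain ⟨x, hx, hx0⟩ := intermediate_value_Ioo hab.le hc ⟨ha, hb⟩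
    exact ⟨x, hx, hx0⟩

set_option maxHeartbeats 1600000 in
theorem chebyshev_extremal_lower_bound (μ L : ℝ) (hμ : 0 < μ) (hμL : μ ≤ L)
    (hκ : 1 < L / μ) (t : ℕ) (p : Polynomial ℝ)
    (hdeg : p.natDegree ≤ t) (hp0 : p.eval 0 = 1) :
    ∃ ζ ∈ Set.Icc μ L,
      2 / (((Real.sqrt (L / μ) + 1) / (Real.sqrt (L / μ) - 1)) ^ t
            + (((Real.sqrt (L / μ) + 1) / (Real.sqrt (L / μ) - 1)) ^ t)⁻¹)
        ≤ |p.eval ζ| := by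
  classical
  have hLμ : μ < L := (one_lt_div hμ).mp hκ
  set s : ℝ := Real.sqrt (L / μ) with hs_def
  have hs : 1 < s := by
    have := Real.sqrt_lt_sqrt (by norm_num) hκ
    rwa [Real.sqrt_one] at this
  have hs2 : s ^ 2 = L / μ := Real.sq_sqrt (by positivity)
  set ρ : ℝ := (s + 1) / (s - 1) with hρ_def
  have hρpos : 0 < ρ := by apply div_pos <;> linarith
  set a : ℝ := Real.log ρ with ha_def
  have hexp : Real.exp a = ρ := Real.exp_log hρpos
  have hLs : L = s ^ 2 * μ := by
    have : s ^ 2 * μ = L := by rw [hs2]; field_simp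
    linarith
  have hcosha : Real.cosh a = (L + μ) / (L - μ) := by
    rw [Real.cosh_eq, hexp, Real.exp_neg, hexp, hLs, hρ_def]
    have h1 : s - 1 ≠ 0 := by linarith
    have h2 : s + 1 ≠ 0 := by linarith
    have h3 : μ ≠ 0 := ne_of_gt hμ
    have h4 : s ^ 2 * μ - μ ≠ 0 := by nlinarith
    field_simp
    have h5 : -1 + s ^ 2 ≠ 0 := by nlinarith
    ring_nf
    field_simp
    ring
  set c : ℝ := Real.cosh ((t : ℝ) * a) with hc_def
  have hc1 : 1 ≤ c := Real.one_le_cosh _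
  have hcpos : (0 : ℝ) < c := by linarith
  have hρt : ρ ^ t + (ρ ^ t)⁻¹ = 2 * c := by
    rw [hc_def, Real.cosh_eq, ← hexp, ← Real.exp_nat_mul, Real.exp_neg, Real.exp_nat_mul]
    ring
  have hB : 2 / (2 * c) = c⁻¹ := by field_simp
  rw [hρt, hB]
  -- trivial case t = 0
  rcases Nat.eq_zero_or_pos t with rfl | ht
  · obtain ⟨c0, rfl⟩ := Polynomial.natDegree_eq_zero.mp (Nat.le_zero.mp hdeg)
    simp only [Polynomial.eval_C] at hp0 ⊢
    refine ⟨μ, ⟨le_refl μ, hμL⟩, ?_⟩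
    have hcone : c = 1 := by rw [hc_def]; norm_num
    rw [hcone, hp0]
    norm_num
  -- main case
  by_contra hcon
  push_neg at hcon
  have htR : (0 : ℝ) < t := by exact_mod_cast ht
  set q : Polynomial ℝ :=
    (Polynomial.Chebyshev.T ℝ (t : ℤ)).comp
      (Polynomial.C ((L + μ) / (L - μ)) - Polynomial.C (2 / (L - μ)) * Polynomial.X) with hq_def
  have hqeval : ∀ x : ℝ, q.eval x
      = (Polynomial.Chebyshev.T ℝ (t : ℤ)).eval ((L + μ) / (L - μ) - (2 / (L - μ)) * x) := by
    intro x; simp [hq_def]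
  have hq0 : q.eval 0 = c := by
    rw [hqeval, mul_zero, sub_zero, ← hcosha, T_real_cosh]
    push_cast
    rfl
  set ζ : ℕ → ℝ := fun k => (L + μ) / 2 - (L - μ) / 2 * Real.cos (k * π / t) with hζ_def
  have hζarg : ∀ k : ℕ, (L + μ) / (L - μ) - (2 / (L - μ)) * ζ k = Real.cos (k * π / t) := by
    intro k
    have hLμ0 : L - μ ≠ 0 := by linarith
    rw [hζ_def]
    field_simp
    ring
  have hqζ : ∀ k : ℕ, q.eval (ζ k) = (-1 : ℝ) ^ k := by
    intro k
    rw [hqeval, hζarg, Polynomial.Chebyshev.T_real_cos]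
    have h1 : ((t : ℤ) : ℝ) * ((k : ℝ) * π / t) = (k : ℝ) * π - 0 := by
      push_cast
      field_simp
      ring
    rw [h1, Real.cos_nat_mul_pi_sub]
    simp
  have hζmem : ∀ k : ℕ, ζ k ∈ Set.Icc μ L := by
    intro k
    have h1 := Real.neg_one_le_cos ((k : ℝ) * π / t)
    have h2 := Real.cos_le_one ((k : ℝ) * π / t)
    constructor
    · rw [hζ_def]; nlinarith
    · rw [hζ_def]; nlinarith
  have hζlt : ∀ k j : ℕ, k < j → j ≤ t → ζ k < ζ j := by
    intro k j hkj hjt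
    have hπ := Real.pi_pos
    have hkt : (k : ℝ) ≤ t := by exact_mod_cast le_trans (le_of_lt hkj) hjt
    have hjt' : (j : ℝ) ≤ t := by exact_mod_cast hjt
    have h1 : (k : ℝ) * π / t ∈ Set.Icc 0 π := by
      constructor
      · positivity
      · rw [div_le_iff₀ htR]
        have := mul_le_mul_of_nonneg_right hkt hπ.le
        linarith
    have h2 : (j : ℝ) * π / t ∈ Set.Icc 0 π := by
      constructor
      · positivity
      · rw [div_le_iff₀ htR]
        have := mul_le_mul_of_nonneg_right hjt' hπ.le
        linarith
    have h3 : (k : ℝ) * π / t < (j : ℝ) * π / t := by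
      have hkj' : (k : ℝ) < j := by exact_mod_cast hkj
      have : (k : ℝ) * π < (j : ℝ) * π := by
        exact mul_lt_mul_of_pos_right hkj' hπ
      exact div_lt_div_of_pos_right this htR
    have hcc := Real.strictAntiOn_cos h1 h2 h3
    rw [hζ_def]
    simp only
    nlinarith
  set r : Polynomial ℝ := Polynomial.C c * p - q with hr_def
  have hr0 : r.eval 0 = 0 := by simp [hr_def, hq0, hp0]
  have hrk : ∀ k : ℕ, r.eval (ζ k) = c * p.eval (ζ k) - (-1 : ℝ) ^ k := by
    intro k; simp [hr_def, hqζ k]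
  have habs : ∀ k : ℕ, |c * p.eval (ζ k)| < 1 := by
    intro k
    have h1 := hcon (ζ k) (hζmem k)
    rw [abs_mul, abs_of_pos hcpos]
    calc c * |p.eval (ζ k)| < c * c⁻¹ := by exact mul_lt_mul_of_pos_left h1 hcpos
      _ = 1 := mul_inv_cancel₀ (ne_of_gt hcpos)
  have hsign : ∀ k : ℕ, (-1 : ℝ) ^ k * r.eval (ζ k) < 0 := by
    intro k
    have h2 := abs_lt.mp (habs k)
    rcases neg_one_pow_eq_or ℝ k with he | he <;> rw [hrk, he] <;> nlinarith [h2.1, h2.2]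
  have hprod : ∀ k : ℕ, r.eval (ζ k) * r.eval (ζ (k + 1)) < 0 := by
    intro k
    have h1 := hsign k
    have h2 := hsign (k + 1)
    rw [pow_succ] at h2
    rcases neg_one_pow_eq_or ℝ k with he | he <;> rw [he] at h1 h2 <;> nlinarith
  have hroots : ∀ k : Fin t, ∃ x ∈ Set.Ioo (ζ k.val) (ζ (k.val + 1)), r.eval x = 0 := by
    intro k
    exact exists_root_Ioo r (hζlt k.val (k.val + 1) (Nat.lt_succ_self _) k.2) (hprod k.val)
  choose x hx1 hx2 using hroots
  have hxmono : StrictMono x := by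
    intro k j hkj
    have h1 : x k < ζ (k.val + 1) := (hx1 k).2
    have h2 : ζ j.val < x j := (hx1 j).1
    have h3 : ζ (k.val + 1) ≤ ζ j.val := by
      have hle : k.val + 1 ≤ j.val := hkj
      rcases eq_or_lt_of_le hle with h | h
      · rw [h]
      · exact le_of_lt (hζlt _ _ h j.2.le)
    linarith
  have hxpos : ∀ k : Fin t, 0 < x k := by
    intro k
    have h1 := (hζmem k.val).1
    have h2 := (hx1 k).1
    linarith
  set S : Finset ℝ := insert 0 (Finset.image x Finset.univ) with hS_def
  have hcardS : S.card = t + 1 := by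
    rw [hS_def, Finset.card_insert_of_notMem, Finset.card_image_of_injective _ hxmono.injective,
      Finset.card_univ, Fintype.card_fin]
    intro hmem
    obtain ⟨k, _, hk⟩ := Finset.mem_image.mp hmem
    exact absurd hk (ne_of_gt (hxpos k))
  have hSeval : ∀ y ∈ S, r.eval y = 0 := by
    intro y hy
    rcases Finset.mem_insert.mp hy with rfl | hy
    · exact hr0
    · obtain ⟨k, _, rfl⟩ := Finset.mem_image.mp hy
      exact hx2 k
  have hrdeg : r.natDegree ≤ t := by
    rw [hr_def]
    refine le_trans (Polynomial.natDegree_sub_le _ _) ?_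
    have h1 : (Polynomial.C c * p).natDegree ≤ t :=
      le_trans (Polynomial.natDegree_C_mul_le _ _) hdeg
    have h2 : q.natDegree ≤ t := by
      rw [hq_def]
      refine le_trans Polynomial.natDegree_comp_le ?_
      have h3 : (Polynomial.C ((L + μ) / (L - μ)) - Polynomial.C (2 / (L - μ))
          * Polynomial.X : ℝ[X]).natDegree ≤ 1 := by
        refine le_trans (Polynomial.natDegree_sub_le _ _) ?_
        have hb : (Polynomial.C (2 / (L - μ)) * Polynomial.X : ℝ[X]).natDegree ≤ 1 :=
          le_trans (Polynomial.natDegree_C_mul_le _ _) Polynomial.natDegree_X_le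
        simp only [max_le_iff, Polynomial.natDegree_C]
        exact ⟨Nat.zero_le _, hb⟩
      calc (Polynomial.Chebyshev.T ℝ (t : ℤ)).natDegree
            * (Polynomial.C ((L + μ) / (L - μ)) - Polynomial.C (2 / (L - μ))
              * Polynomial.X : ℝ[X]).natDegree
          ≤ t * 1 := Nat.mul_le_mul (natDegree_T_le t) h3
        _ = t := by ring
    simp only [max_le_iff]
    exact ⟨h1, h2⟩
  have hr_zero : r = 0 :=
    Polynomial.eq_zero_of_natDegree_lt_card_of_eval_eq_zero' r S hSeval (by rw [hcardS]; omega)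
  have hfinal := hsign 0
  rw [hr_zero] at hfinal
  simp at hfinal
end

section
/- Let f_1, ..., f_m : ℝ^d → ℝ be differentiable. If x⋆ is weakly Pareto optimal (i.e., there is no y with f_i(y) < f_i(x⋆) for all i), then the origin lies in the convex hull of {∇f_1(x⋆), ..., ∇f_m(x⋆)}. -/
open Filter Topology RealInnerProductSpace

theorem weak_pareto_implies_stationary {d m : ℕ} (hm : 0 < m)
    (f : Fin m → EuclideanSpace ℝ (Fin d) → ℝ)
    (hf : ∀ i, Differentiable ℝ (f i)) (xstar : EuclideanSpace ℝ (Fin d))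
    (hweak : ¬ ∃ y, ∀ i, f i y < f i xstar) :
    (0 : EuclideanSpace ℝ (Fin d)) ∈
      convexHull ℝ (Set.range fun i => gradient (f i) xstar) := by
  by_contra h0
  set g : Fin m → EuclideanSpace ℝ (Fin d) := fun i => gradient (f i) xstar
  have hconv : Convex ℝ (convexHull ℝ (Set.range g)) := convex_convexHull ℝ _
  have hclosed : IsClosed (convexHull ℝ (Set.range g)) :=
    ((Set.finite_range g).isCompact_convexHull ℝ).isClosed
  obtain ⟨φ, u, hu, hgt⟩ := geometric_hahn_banach_point_closed hconv hclosed h0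
  have hu0 : (0:ℝ) < u := by simpa using hu
  set v : EuclideanSpace ℝ (Fin d) := (InnerProductSpace.toDual ℝ _).symm φ
  have hφ : ∀ x, φ x = (inner ℝ v x : ℝ) := by
    intro x
    have := (InnerProductSpace.toDual ℝ (EuclideanSpace ℝ (Fin d))).apply_symm_apply φ
    rw [← this]; rfl
  set w : EuclideanSpace ℝ (Fin d) := -v with hw
  have hdir : ∀ i, (inner ℝ (g i) w : ℝ) < 0 := by
    intro i
    have hgi : u < φ (g i) := hgt (g i) (subset_convexHull ℝ _ ⟨i, rfl⟩)
    have h1 : 0 < (inner ℝ v (g i) : ℝ) := lt_trans hu0 (by rw [← hφ]; exact hgi)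
    have h2 : (0:ℝ) < (inner ℝ (g i) v : ℝ) := by rwa [real_inner_comm]
    rw [hw, inner_neg_right]
    linarith
  have key : ∀ i, ∀ᶠ t in 𝓝[>] (0:ℝ), f i (xstar + t • w) < f i xstar := by
    intro i
    set ψ : ℝ → ℝ := fun t => f i (xstar + t • w) with hψ
    have hc : HasDerivAt (fun t : ℝ => xstar + t • w) w 0 := by
      simpa using ((hasDerivAt_id (0:ℝ)).smul_const w).const_add xstar
    have hfd : HasFDerivAt (f i) (InnerProductSpace.toDual ℝ _ (g i)) xstar :=
      (hf i xstar).hasGradientAt.hasFDerivAt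
    have hfd0 : HasFDerivAt (f i) (InnerProductSpace.toDual ℝ _ (g i))
        ((fun t : ℝ => xstar + t • w) 0) := by simpa using hfd
    have hψd : HasDerivAt ψ ((inner ℝ (g i) w : ℝ)) 0 := by
      have := hfd0.comp_hasDerivAt 0 hc
      simp only [InnerProductSpace.toDual_apply_apply] at this
      exact this
    have hslope : Tendsto (slope ψ 0) (𝓝[≠] (0:ℝ)) (𝓝 ((inner ℝ (g i) w : ℝ))) :=
      hasDerivAt_iff_tendsto_slope.1 hψd
    have hslope' : Tendsto (slope ψ 0) (𝓝[>] (0:ℝ)) (𝓝 ((inner ℝ (g i) w : ℝ))) :=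
      hslope.mono_left (nhdsWithin_mono _ (fun t ht => ne_of_gt ht))
    have hev : ∀ᶠ t in 𝓝[>] (0:ℝ), slope ψ 0 t < 0 :=
      hslope' (Iio_mem_nhds (hdir i))
    filter_upwards [hev, self_mem_nhdsWithin] with t hts (htpos : 0 < t)
    have : (ψ t - ψ 0) / t < 0 := by simpa [slope_def_field, div_eq_iff] using hts
    have := (div_neg_iff.1 this).resolve_left (fun h => absurd htpos (not_lt.2 h.2.le))
    simpa [hψ] using sub_neg.1 this.1
  obtain ⟨t, ht⟩ := (eventually_all.2 key).exists
  exact hweak ⟨xstar + t • w, ht⟩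
end

section
/- Let f_1, ..., f_m : ℝ^d → ℝ be convex and differentiable. For x⋆ ∈ ℝ^d, the following are equivalent: (i) x⋆ is weakly Pareto optimal; (ii) there exists λ in the unit simplex with ∑_i λ_i ∇f_i(x⋆) = 0; (iii) there exists λ in the unit simplex such that x⋆ minimizes f_λ = ∑_i λ_i f_i over ℝ^d. -/
open Filter Topology RealInnerProductSpace

/-- First-order condition for convex differentiable functions. -/
lemma convex_first_order_aux {E : Type*} [NormedAddCommGroup E] [NormedSpace ℝ E]
    {f : E → ℝ} (hc : ConvexOn ℝ Set.univ f) (hd : Differentiable ℝ f) (x y : E) :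
    f x + fderiv ℝ f x (y - x) ≤ f y := by
  set v := y - x with hv
  have hγ : ∀ t : ℝ, HasDerivAt (fun t : ℝ => x + t • v) v t := by
    intro t
    simpa using ((hasDerivAt_id t).smul_const v).const_add x
  have hφ0 : HasDerivAt (fun t : ℝ => f (x + t • v)) (fderiv ℝ f x v) 0 := by
    have := ((hd (x + (0:ℝ) • v)).hasFDerivAt).comp_hasDerivAt 0 (hγ 0)
    simp only [zero_smul, add_zero] at this
    exact this
  have hφc : ConvexOn ℝ Set.univ (fun t : ℝ => f (x + t • v)) := by
    have h := hc.comp_affineMap (AffineMap.lineMap x y : ℝ →ᵃ[ℝ] E)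
    have heq : (f ∘ (AffineMap.lineMap x y : ℝ →ᵃ[ℝ] E)) = fun t : ℝ => f (x + t • v) := by
      funext t
      simp [AffineMap.lineMap_apply, hv, add_comm]
    rw [heq] at h
    simpa using h
  have hslope := hφc.le_slope_of_hasDerivAt (Set.mem_univ (0:ℝ)) (Set.mem_univ (1:ℝ))
    one_pos hφ0
  have : fderiv ℝ f x v ≤ f (x + v) - f x := by
    simpa [slope] using hslope
  have hxy : x + v = y := by rw [hv]; abel
  rw [hxy] at this
  linarith

theorem convex_weak_pareto_characterization {d m : ℕ} (hm : 0 < m)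
    (f : Fin m → EuclideanSpace ℝ (Fin d) → ℝ)
    (hconv : ∀ i, ConvexOn ℝ Set.univ (f i))
    (hdiff : ∀ i, Differentiable ℝ (f i)) (xstar : EuclideanSpace ℝ (Fin d)) :
    ((¬ ∃ y, ∀ i, f i y < f i xstar)
      ↔ ∃ lam : Fin m → ℝ, (∀ i, 0 ≤ lam i) ∧ (∑ i, lam i = 1) ∧
          ∑ i, lam i • gradient (f i) xstar = 0) ∧
    ((¬ ∃ y, ∀ i, f i y < f i xstar)
      ↔ ∃ lam : Fin m → ℝ, (∀ i, 0 ≤ lam i) ∧ (∑ i, lam i = 1) ∧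
          ∀ y, ∑ i, lam i * f i xstar ≤ ∑ i, lam i * f i y) := by
  set g : Fin m → EuclideanSpace ℝ (Fin d) := fun i => gradient (f i) xstar with hg
  have hgrad : ∀ i (v : EuclideanSpace ℝ (Fin d)), (inner (𝕜 := ℝ) (g i) v : ℝ) = fderiv ℝ (f i) xstar v := by
    intro i v
    simp only [hg, gradient]
    exact InnerProductSpace.toDual_symm_apply
  -- A → B
  have hAB : (∃ lam : Fin m → ℝ, (∀ i, 0 ≤ lam i) ∧ (∑ i, lam i = 1) ∧
        ∑ i, lam i • g i = 0) →
      (∃ lam : Fin m → ℝ, (∀ i, 0 ≤ lam i) ∧ (∑ i, lam i = 1) ∧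
        ∀ y, ∑ i, lam i * f i xstar ≤ ∑ i, lam i * f i y) := by
    rintro ⟨lam, hpos, hsum, hzero⟩
    refine ⟨lam, hpos, hsum, fun y => ?_⟩
    have hterm : ∀ i, lam i * f i xstar + lam i * fderiv ℝ (f i) xstar (y - xstar)
        ≤ lam i * f i y := by
      intro i
      have := convex_first_order_aux (hconv i) (hdiff i) xstar y
      nlinarith [hpos i]
    have hsum' := Finset.sum_le_sum (s := Finset.univ) (fun i _ => hterm i)
    rw [Finset.sum_add_distrib] at hsum'
    have hinner : ∑ i, lam i * fderiv ℝ (f i) xstar (y - xstar) = 0 := by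
      have : ∑ i, lam i * fderiv ℝ (f i) xstar (y - xstar)
          = (inner (𝕜 := ℝ) (∑ i, lam i • g i) (y - xstar) : ℝ) := by
        rw [sum_inner]
        congr 1
        funext i
        rw [real_inner_smul_left, hgrad]
      rw [this, hzero, inner_zero_left]
    rw [hinner, add_zero] at hsum'
    exact hsum'
  -- B → P
  have hBP : (∃ lam : Fin m → ℝ, (∀ i, 0 ≤ lam i) ∧ (∑ i, lam i = 1) ∧
        ∀ y, ∑ i, lam i * f i xstar ≤ ∑ i, lam i * f i y) →
      (¬ ∃ y, ∀ i, f i y < f i xstar) := by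
    rintro ⟨lam, hpos, hsum, hmin⟩ ⟨y, hy⟩
    obtain ⟨i0, hi0⟩ : ∃ i, 0 < lam i := by
      by_contra h
      push_neg at h
      have : ∀ i, lam i = 0 := fun i => le_antisymm (h i) (hpos i)
      simp [this] at hsum
    have hlt : ∑ i, lam i * f i y < ∑ i, lam i * f i xstar := by
      refine Finset.sum_lt_sum (fun i _ => ?_) ⟨i0, Finset.mem_univ i0, ?_⟩
      · exact mul_le_mul_of_nonneg_left (hy i).le (hpos i)
      · exact mul_lt_mul_of_pos_left (hy i0) hi0
    exact absurd (hmin y) (not_le.mpr hlt)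
  -- P → A
  have hPA : (¬ ∃ y, ∀ i, f i y < f i xstar) →
      (∃ lam : Fin m → ℝ, (∀ i, 0 ≤ lam i) ∧ (∑ i, lam i = 1) ∧
        ∑ i, lam i • g i = 0) := by
    intro hP
    set L : (Fin m → ℝ) →ₗ[ℝ] EuclideanSpace ℝ (Fin d) :=
      ∑ i : Fin m, (LinearMap.proj i : (Fin m → ℝ) →ₗ[ℝ] ℝ).smulRight (g i) with hL
    have hLapp : ∀ lam : Fin m → ℝ, L lam = ∑ i, lam i • g i := by
      intro lam
      simp [hL, LinearMap.sum_apply, LinearMap.smulRight_apply]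
    set S : Set (EuclideanSpace ℝ (Fin d)) := L '' stdSimplex ℝ (Fin m) with hS
    by_cases h0 : (0 : EuclideanSpace ℝ (Fin d)) ∈ S
    · obtain ⟨lam, hmem, heq⟩ := h0
      exact ⟨lam, hmem.1, hmem.2, by rw [← hLapp]; exact heq⟩
    · exfalso
      have hconvS : Convex ℝ S := (convex_stdSimplex ℝ (Fin m)).linear_image L
      have hcompS : IsCompact S := (isCompact_stdSimplex ℝ (Fin m)).image L.continuous_of_finiteDimensional
      obtain ⟨u, c, hu, hc⟩ := geometric_hahn_banach_closed_point hconvS hcompS.isClosed h0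
      have hc0 : c < 0 := by simpa using hc
      set v : EuclideanSpace ℝ (Fin d) := (InnerProductSpace.toDual ℝ (EuclideanSpace ℝ (Fin d))).symm u with hvdef
      have hvle : ∀ a ∈ S, (inner (𝕜 := ℝ) v a : ℝ) < 0 := by
        intro a ha
        have : (inner (𝕜 := ℝ) v a : ℝ) = u a := InnerProductSpace.toDual_symm_apply
        rw [this]
        exact (hu a ha).trans hc0
      have hgiS : ∀ i, g i ∈ S := by
        intro i
        refine ⟨Pi.single i 1, single_mem_stdSimplex ℝ i, ?_⟩
        rw [hLapp]
        rw [Finset.sum_eq_single i]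
        · simp
        · intro j _ hj; simp [Pi.single_apply, hj]
        · simp
      have hderiv_neg : ∀ i, fderiv ℝ (f i) xstar v < 0 := by
        intro i
        rw [← hgrad i v, real_inner_comm]
        exact hvle (g i) (hgiS i)
      -- for each i, eventually along 𝓝[>] 0 the function decreases
      have hev : ∀ i, ∀ᶠ t in 𝓝[>] (0:ℝ), f i (xstar + t • v) < f i xstar := by
        intro i
        set φ : ℝ → ℝ := fun t => f i (xstar + t • v) with hφ
        have hγ : ∀ t : ℝ, HasDerivAt (fun t : ℝ => xstar + t • v) v t := by
          intro t
          simpa using ((hasDerivAt_id t).smul_const v).const_add xstar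
        have hφ0 : HasDerivAt φ (fderiv ℝ (f i) xstar v) 0 := by
          have := ((hdiff i (xstar + (0:ℝ) • v)).hasFDerivAt).comp_hasDerivAt 0 (hγ 0)
          simp only [zero_smul, add_zero] at this
          exact this
        have hslope : Tendsto (slope φ 0) (𝓝[≠] (0:ℝ)) (𝓝 (fderiv ℝ (f i) xstar v)) :=
          hasDerivAt_iff_tendsto_slope.mp hφ0
        have hsub : 𝓝[>] (0:ℝ) ≤ 𝓝[≠] (0:ℝ) :=
          nhdsWithin_mono _ (fun t ht => ne_of_gt ht)
        have hslope' : Tendsto (slope φ 0) (𝓝[>] (0:ℝ)) (𝓝 (fderiv ℝ (f i) xstar v)) :=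
          hslope.mono_left hsub
        have hevslope : ∀ᶠ t in 𝓝[>] (0:ℝ), slope φ 0 t < 0 :=
          hslope'.eventually_lt_const (hderiv_neg i)
        have hevpos : ∀ᶠ t in 𝓝[>] (0:ℝ), 0 < t := eventually_mem_nhdsWithin
        filter_upwards [hevslope, hevpos] with t hst hpt
        have : t⁻¹ * (φ t - φ 0) < 0 := by simpa [slope] using hst
        have hnum : φ t - φ 0 < 0 := by
          by_contra hge
          push_neg at hge
          exact absurd (mul_nonneg (inv_nonneg.mpr hpt.le) hge) (not_le.mpr this)
        have hφ0eq : φ 0 = f i xstar := by simp [hφ]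
        have : φ t < φ 0 := by linarith
        rw [hφ0eq] at this
        exact this
      have hall : ∀ᶠ t in 𝓝[>] (0:ℝ), ∀ i, f i (xstar + t • v) < f i xstar :=
        eventually_all.mpr hev
      obtain ⟨t, ht⟩ := hall.exists
      exact hP ⟨xstar + t • v, ht⟩
  exact ⟨⟨hPA, fun hA => hBP (hAB hA)⟩, ⟨fun hP => hAB (hPA hP), hBP⟩⟩
end

section
/- Fix L > 0, μ with 0 < μ ≤ L, κ = L/μ > 1, T ≥ 1, and R > 0. For any family of real polynomials p_T of degree at most T with p_T(0) = 1, there exists a symmetric positive definite matrix H with spectrum in [μ, L] and a vector e with ‖e‖ = R such that ‖H p_T(H) e‖ ≥ μ R ((√κ - 1)/(√κ + 1))^T. -/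
open Polynomial Complex

lemma evalP (p : Polynomial ℂ) (a b : ℂ) (T : ℕ) (hdeg : p.natDegree ≤ T) (u : ℂ) (hu : u ≠ 0) :
    (X ^ (T - p.natDegree) *
      (p.sum fun k c => C c * X ^ (p.natDegree - k) * (C a * X - C b * X ^ 2 - C b) ^ k)).eval u
    = u ^ T * p.eval (a - b * (u + u⁻¹)) := by
  set n := p.natDegree with hn
  rw [Polynomial.eval_mul, Polynomial.eval_pow, Polynomial.eval_X, Polynomial.sum_def,
    Polynomial.eval_finset_sum, Polynomial.eval_eq_sum, Polynomial.sum_def, Finset.mul_sum,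
    Finset.mul_sum]
  refine Finset.sum_congr rfl fun k hk => ?_
  have hk' : k ≤ n := Polynomial.le_natDegree_of_mem_supp k hk
  simp only [Polynomial.eval_mul, Polynomial.eval_pow, Polynomial.eval_C, Polynomial.eval_X,
    Polynomial.eval_sub]
  have key : a - b * (u + u⁻¹) = (a * u - b * u ^ 2 - b) / u := by
    field_simp; ring
  have h1 : u ^ (T - n) * u ^ (n - k) = u ^ (T - k) := by rw [← pow_add]; congr 1; omega
  have h2 : u ^ T = u ^ (T - k) * u ^ k := by rw [← pow_add]; congr 1; omega
  rw [key, div_pow, h2]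
  have hk0 : (u : ℂ) ^ k ≠ 0 := pow_ne_zero _ hu
  field_simp
  linear_combination (p.coeff k * (a * u - b * u ^ 2 - b) ^ k) * h1

open Polynomial Complex

lemma cheb_lb (L μ : ℝ) (T : ℕ) (hμ : 0 < μ) (hκ : 1 < L / μ) (p : Polynomial ℝ)
    (hdeg : p.natDegree ≤ T) (hp0 : p.eval 0 = 1) :
    ∃ x ∈ Set.Icc μ L,
      ((Real.sqrt (L / μ) - 1) / (Real.sqrt (L / μ) + 1)) ^ T ≤ |p.eval x| := by
  have hL : μ < L := (one_lt_div hμ).mp hκ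
  set s := Real.sqrt (L / μ) with hsdef
  have hs : 1 < s := by
    rw [hsdef]
    rw [show (1:ℝ) = Real.sqrt 1 by simp]
    exact Real.sqrt_lt_sqrt (by norm_num) hκ
  have hs2 : s ^ 2 = L / μ := Real.sq_sqrt (by positivity)
  set u0 : ℝ := (s - 1) / (s + 1) with hu0def
  have hu0pos : 0 < u0 := by apply div_pos <;> nlinarith
  have hu0lt : u0 < 1 := by rw [div_lt_one (by nlinarith)]; nlinarith
  -- max of |p| on [μ,L]
  obtain ⟨x₀, hx₀I, hmax⟩ := (isCompact_Icc (a := μ) (b := L)).exists_isMaxOn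
    ⟨μ, le_refl μ, hL.le⟩ ((continuous_abs.comp (p.continuous)).continuousOn)
  refine ⟨x₀, hx₀I, ?_⟩
  set M := |p.eval x₀| with hM
  -- complex setup
  set a : ℝ := (L + μ) / 2 with hadef
  set b : ℝ := (L - μ) / 4 with hbdef
  set pc : Polynomial ℂ := p.map (algebraMap ℝ ℂ) with hpc
  have hpceval : ∀ x : ℝ, pc.eval (x : ℂ) = ((p.eval x : ℝ) : ℂ) := by
    intro x
    rw [hpc, Polynomial.eval_map]
    exact Polynomial.eval₂_at_apply (algebraMap ℝ ℂ) x
  have hpcdeg : pc.natDegree ≤ T := by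
    rw [hpc]
    exact Polynomial.natDegree_map_le.trans hdeg
  set P : Polynomial ℂ := X ^ (T - pc.natDegree) *
      (pc.sum fun k c => C c * X ^ (pc.natDegree - k) *
        (C (a:ℂ) * X - C (b:ℂ) * X ^ 2 - C (b:ℂ)) ^ k) with hP
  -- bound on the sphere
  have hbd : ∀ z ∈ frontier (Metric.ball (0:ℂ) 1), ‖P.eval z‖ ≤ M := by
    intro z hz
    rw [frontier_ball (0:ℂ) one_ne_zero, Metric.mem_sphere, dist_zero_right] at hz
    have hz0 : z ≠ 0 := by intro h; rw [h] at hz; simp at hz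
    have hinv : z⁻¹ = starRingEnd ℂ z := Complex.inv_eq_conj hz
    have hre : z + z⁻¹ = ((2 * z.re : ℝ) : ℂ) := by
      rw [hinv, Complex.add_conj]
    have harg : ((a:ℂ)) - (b:ℂ) * (z + z⁻¹) = ((a - b * (2 * z.re) : ℝ) : ℂ) := by
      rw [hre]; push_cast; ring
    have hzre : |z.re| ≤ 1 := by
      calc |z.re| ≤ ‖z‖ := Complex.abs_re_le_norm z
      _ = 1 := hz
    have hmem : a - b * (2 * z.re) ∈ Set.Icc μ L := by
      rw [abs_le] at hzre
      constructor <;> [nlinarith; nlinarith]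
    rw [hP, evalP pc _ _ T hpcdeg z hz0, harg, hpceval]
    rw [norm_mul, norm_pow, hz, one_pow, one_mul, Complex.norm_real, Real.norm_eq_abs]
    exact hmax hmem
  -- max modulus at u0
  have hclos : ((u0 : ℂ)) ∈ closure (Metric.ball (0:ℂ) 1) := by
    apply subset_closure
    rw [Metric.mem_ball, dist_zero_right, Complex.norm_real, Real.norm_eq_abs, abs_of_pos hu0pos]
    exact hu0lt
  have hmm : ‖P.eval (u0 : ℂ)‖ ≤ M :=
    Complex.norm_le_of_forall_mem_frontier_norm_le Metric.isBounded_ball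
      (P.differentiable.diffContOnCl) hbd hclos
  -- evaluate P at u0
  have hargu : a - b * (u0 + u0⁻¹) = 0 := by
    have h1 : s - 1 ≠ 0 := by nlinarith
    have h2 : s + 1 ≠ 0 := by nlinarith
    have hμ' : μ ≠ 0 := ne_of_gt hμ
    rw [hu0def, hadef, hbdef]
    have hs2' : μ * s ^ 2 = L := by rw [hs2]; field_simp
    field_simp
    linear_combination 8 * hs2'
  have hu0c : ((u0:ℂ)) ≠ 0 := by
    simpa using ne_of_gt hu0pos
  have hPev : P.eval (u0 : ℂ) = ((u0 : ℂ)) ^ T := by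
    rw [hP, evalP pc _ _ T hpcdeg _ hu0c]
    have : ((a:ℂ)) - (b:ℂ) * ((u0:ℂ) + ((u0:ℂ))⁻¹) = ((a - b * (u0 + u0⁻¹) : ℝ) : ℂ) := by
      push_cast; ring
    rw [this, hargu]
    rw [show ((0:ℝ):ℂ) = ((0:ℝ):ℂ) from rfl, hpceval, hp0]
    simp
  rw [hPev] at hmm
  calc u0 ^ T = ‖((u0:ℂ)) ^ T‖ := by
        rw [norm_pow, Complex.norm_real, Real.norm_eq_abs, abs_of_pos hu0pos]
  _ ≤ M := hmm
theorem strongly_convex_lower_bound (L μ R : ℝ) (T : ℕ)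
    (hμ : 0 < μ) (hμL : μ ≤ L) (hκ : 1 < L / μ) (hT : 1 ≤ T) (hR : 0 < R)
    (p : Polynomial ℝ) (hdeg : p.natDegree ≤ T) (hp0 : p.eval 0 = 1) :
    ∃ (d : ℕ) (H : Matrix (Fin d) (Fin d) ℝ), H.PosDef ∧
      spectrum ℝ H ⊆ Set.Icc μ L ∧
      ∃ e : EuclideanSpace ℝ (Fin d), ‖e‖ = R ∧
        μ * R * ((Real.sqrt (L / μ) - 1) / (Real.sqrt (L / μ) + 1)) ^ T
          ≤ ‖Matrix.toEuclideanCLM (𝕜 := ℝ) (H * Polynomial.aeval H p) e‖ := by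
  obtain ⟨x₀, hx₀, hb⟩ := cheb_lb L μ T hμ hκ p hdeg hp0
  have hx0pos : 0 < x₀ := hμ.trans_le hx₀.1
  set A := Matrix (Fin 1) (Fin 1) ℝ
  refine ⟨1, algebraMap ℝ A x₀, ?_, ?_, ?_⟩
  · have hHd : algebraMap ℝ A x₀ = Matrix.diagonal (fun _ => x₀) := by
      ext i j
      rw [Matrix.algebraMap_matrix_apply]
      fin_cases i <;> fin_cases j <;> simp
    rw [hHd]
    exact Matrix.PosDef.diagonal (fun _ => hx0pos)
  · rw [spectrum.scalar_eq x₀]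
    exact Set.singleton_subset_iff.mpr hx₀
  · refine ⟨EuclideanSpace.single (0 : Fin 1) R, ?_, ?_⟩
    · rw [EuclideanSpace.norm_single, Real.norm_eq_abs, abs_of_pos hR]
    · have hHp : algebraMap ℝ A x₀ * Polynomial.aeval (algebraMap ℝ A x₀) p
          = algebraMap ℝ A (x₀ * p.eval x₀) := by
        rw [Polynomial.aeval_algebraMap_apply_eq_algebraMap_eval, ← map_mul]
      rw [hHp]
      set c := x₀ * p.eval x₀ with hc
      have hmapsm : (Matrix.toEuclideanCLM (𝕜 := ℝ) (algebraMap ℝ A c))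
          = c • (1 : EuclideanSpace ℝ (Fin 1) →L[ℝ] EuclideanSpace ℝ (Fin 1)) := by
        rw [Algebra.algebraMap_eq_smul_one, map_smul, map_one]
      rw [hmapsm]
      have : (c • (1 : EuclideanSpace ℝ (Fin 1) →L[ℝ] EuclideanSpace ℝ (Fin 1)))
          (EuclideanSpace.single (0 : Fin 1) R) = c • EuclideanSpace.single (0 : Fin 1) R := rfl
      rw [this, norm_smul, EuclideanSpace.norm_single, Real.norm_eq_abs, Real.norm_eq_abs,
        abs_of_pos hR, hc, abs_mul, abs_of_pos hx0pos]
      have h1 : μ * ((Real.sqrt (L / μ) - 1) / (Real.sqrt (L / μ) + 1)) ^ T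
          ≤ x₀ * |p.eval x₀| := by
        nlinarith [abs_nonneg (p.eval x₀), hx₀.1]
      nlinarith
end

section
/- Let g : V → ℝ be differentiable on a finite-dimensional inner product space V, let W be another finite-dimensional inner product space, let a_1, ..., a_m ∈ W, let γ > 0, and define f_i(x_V, x_W) = g(x_V) + (γ/2)‖x_W - a_i‖² on V × W. Then for every x = (x_V, x_W), the squared Pareto stationarity gap satisfies G(x)² = ‖∇g(x_V)‖² + γ² · dist(x_W, conv{a_1,...,a_m})², and in particular G(x) ≥ ‖∇g(x_V)‖. -/
open scoped RealInnerProductSpace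

theorem grad_quad {W : Type*} [NormedAddCommGroup W] [InnerProductSpace ℝ W] [CompleteSpace W]
    (γ : ℝ) (a w : W) :
    HasGradientAt (fun w => γ / 2 * ‖w - a‖ ^ 2) (γ • (w - a)) w := by
  rw [hasGradientAt_iff_hasFDerivAt]
  have h1 : HasFDerivAt (fun w : W => w - a) (ContinuousLinearMap.id ℝ W) w :=
    (hasFDerivAt_id w).sub_const a
  have h2 := (h1.inner ℝ h1).const_mul (γ/2)
  convert h2 using 2 with z
  · rfl
  · rw [real_inner_self_eq_norm_sq]
  · ext h
    simp only [InnerProductSpace.toDual_apply_apply, ContinuousLinearMap.smul_apply,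
      ContinuousLinearMap.comp_apply, ContinuousLinearMap.prod_apply,
      ContinuousLinearMap.id_apply, fderivInnerCLM_apply, inner_smul_left,
      RCLike.conj_to_real, smul_eq_mul]
    rw [real_inner_comm h (w - a)]
    ring

theorem grad_f {V W : Type*} [NormedAddCommGroup V] [InnerProductSpace ℝ V] [FiniteDimensional ℝ V]
    [NormedAddCommGroup W] [InnerProductSpace ℝ W] [FiniteDimensional ℝ W]
    (γ : ℝ) (g : V → ℝ) (hg : Differentiable ℝ g) (b : W)
    (x : WithLp 2 (V × W)) :
    HasGradientAt (fun z : WithLp 2 (V × W) => g z.fst + γ / 2 * ‖z.snd - b‖ ^ 2)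
      ((WithLp.equiv 2 (V × W)).symm (gradient g x.fst, γ • (x.snd - b))) x := by
  rw [hasGradientAt_iff_hasFDerivAt]
  have e := WithLp.prodContinuousLinearEquiv 2 ℝ V W
  have hfst : HasFDerivAt (fun z : WithLp 2 (V × W) => z.fst)
      ((ContinuousLinearMap.fst ℝ V W).comp (WithLp.prodContinuousLinearEquiv 2 ℝ V W).toContinuousLinearMap) x :=
    ((ContinuousLinearMap.fst ℝ V W).hasFDerivAt).comp x
      (WithLp.prodContinuousLinearEquiv 2 ℝ V W).hasFDerivAt
  have hsnd : HasFDerivAt (fun z : WithLp 2 (V × W) => z.snd)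
      ((ContinuousLinearMap.snd ℝ V W).comp (WithLp.prodContinuousLinearEquiv 2 ℝ V W).toContinuousLinearMap) x :=
    ((ContinuousLinearMap.snd ℝ V W).hasFDerivAt).comp x
      (WithLp.prodContinuousLinearEquiv 2 ℝ V W).hasFDerivAt
  have hG : HasGradientAt g (gradient g x.fst) x.fst := (hg x.fst).hasGradientAt
  have h1 : HasFDerivAt (fun z : WithLp 2 (V × W) => g z.fst) _ x :=
    hG.hasFDerivAt.comp x hfst
  have h2 : HasFDerivAt (fun z : WithLp 2 (V × W) => γ / 2 * ‖z.snd - b‖ ^ 2) _ x :=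
    (grad_quad γ b x.snd).hasFDerivAt.comp x hsnd
  have h3 := h1.add h2
  convert h3 using 1
  · rfl
  · rfl
  · rfl
  · ext z
    simp [WithLp.prod_inner_apply]
    rw [real_inner_smul_left, inner_sub_left]

theorem pareto_gap_decomposition
    {V W : Type*} [NormedAddCommGroup V] [InnerProductSpace ℝ V] [FiniteDimensional ℝ V]
    [NormedAddCommGroup W] [InnerProductSpace ℝ W] [FiniteDimensional ℝ W]
    {m : ℕ} (hm : 0 < m) (γ : ℝ) (hγ : 0 < γ)
    (g : V → ℝ) (hg : Differentiable ℝ g) (a : Fin m → W)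
    (f : Fin m → WithLp 2 (V × W) → ℝ)
    (hf : ∀ i z, f i z = g z.fst + γ / 2 * ‖z.snd - a i‖ ^ 2)
    (G : WithLp 2 (V × W) → ℝ)
    (hG : ∀ z, G z = sInf {r : ℝ | ∃ lam : Fin m → ℝ,
      (∀ i, 0 ≤ lam i) ∧ (∑ i, lam i = 1) ∧
      r = ‖∑ i, lam i • gradient (f i) z‖})
    (x : WithLp 2 (V × W)) :
    G x ^ 2 = ‖gradient g x.fst‖ ^ 2
        + γ ^ 2 * (Metric.infDist x.snd (convexHull ℝ (Set.range a))) ^ 2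
      ∧ ‖gradient g x.fst‖ ≤ G x := by
  classical
  set c := gradient g x.fst with hc
  set S := convexHull ℝ (Set.range a) with hS
  set d := Metric.infDist x.snd S with hd
  -- gradient formula
  have hgrad : ∀ i, gradient (f i) x
      = (WithLp.equiv 2 (V × W)).symm (c, γ • (x.snd - a i)) := by
    intro i
    have hfi : f i = fun z => g z.fst + γ / 2 * ‖z.snd - a i‖ ^ 2 := funext (hf i)
    rw [hfi]
    exact (grad_f γ g hg (a i) x).gradient
  -- norm of convex combination of gradients
  have hnorm : ∀ lam : Fin m → ℝ, (∑ i, lam i = 1) →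
      ‖∑ i, lam i • gradient (f i) x‖ ^ 2
        = ‖c‖ ^ 2 + γ ^ 2 * ‖x.snd - ∑ i, lam i • a i‖ ^ 2 := by
    intro lam hsum
    have hsumeq : (∑ i, lam i • gradient (f i) x)
        = (WithLp.equiv 2 (V × W)).symm (c, γ • (x.snd - ∑ i, lam i • a i)) := by
      have := (WithLp.linearEquiv 2 ℝ (V × W)).injective
      apply this
      rw [map_sum]
      simp only [map_smul, hgrad]
      have hL : ∀ y : V × W, (WithLp.linearEquiv 2 ℝ (V × W)) ((WithLp.equiv 2 (V × W)).symm y) = y :=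
        fun y => rfl
      simp only [hL]
      rw [Prod.ext_iff]
      constructor
      · simp only [Prod.fst_sum, Prod.smul_fst]
        rw [← Finset.sum_smul, hsum, one_smul]
      · simp only [Prod.snd_sum, Prod.smul_snd]
        have hterm : ∀ i ∈ Finset.univ, lam i • γ • (x.snd - a i)
            = γ • (lam i • x.snd - lam i • a i) := by
          intro i _
          rw [smul_comm, smul_sub]
        rw [Finset.sum_congr rfl hterm, ← Finset.smul_sum, Finset.sum_sub_distrib,
          ← Finset.sum_smul, hsum, one_smul]
    rw [hsumeq, WithLp.prod_norm_sq_eq_of_L2]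
    have h1 : ((WithLp.equiv 2 (V × W)).symm (c, γ • (x.snd - ∑ i, lam i • a i))).fst = c := rfl
    have h2 : ((WithLp.equiv 2 (V × W)).symm (c, γ • (x.snd - ∑ i, lam i • a i))).snd
        = γ • (x.snd - ∑ i, lam i • a i) := rfl
    rw [h1, h2, norm_smul]
    rw [mul_pow]
    congr 1
    simp [abs_of_pos hγ]
  -- convex hull characterization
  have hconv : S = (fun lam : Fin m → ℝ => ∑ i, lam i • a i) '' stdSimplex ℝ (Fin m) := by
    apply le_antisymm
    · apply convexHull_min
      · rintro _ ⟨j, rfl⟩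
        refine ⟨fun i => if j = i then 1 else 0, ite_eq_mem_stdSimplex ℝ j, ?_⟩
        simp [Finset.sum_ite_eq]
      · have hlin : IsLinearMap ℝ (fun lam : Fin m → ℝ => ∑ i, lam i • a i) := by
          constructor
          · intro p q; simp [add_smul, Finset.sum_add_distrib]
          · intro r p; simp [smul_smul, Finset.smul_sum]
        exact (convex_stdSimplex ℝ (Fin m)).is_linear_image hlin
    · rintro _ ⟨lam, ⟨h0, h1⟩, rfl⟩
      exact (convex_convexHull ℝ (Set.range a)).sum_mem (fun i _ => h0 i) h1
        (fun i _ => subset_convexHull ℝ _ ⟨i, rfl⟩)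
  -- compactness, attained infdist
  have hScpt : IsCompact S := (Set.finite_range a).isCompact_convexHull ℝ
  have hSne : S.Nonempty := ⟨a ⟨0, hm⟩, subset_convexHull ℝ _ ⟨⟨0, hm⟩, rfl⟩⟩
  obtain ⟨y, hyS, hyd⟩ := hScpt.exists_infDist_eq_dist hSne x.snd
  obtain ⟨lam0, hlam0, hy⟩ := hconv ▸ hyS
  -- the candidate value
  set r0 : ℝ := ‖∑ i, lam0 i • gradient (f i) x‖ with hr0
  have hy' : (∑ i, lam0 i • a i) = y := hy
  have hr0sq : r0 ^ 2 = ‖c‖ ^ 2 + γ ^ 2 * d ^ 2 := by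
    rw [hr0, hnorm lam0 hlam0.2, hd, hyd, dist_eq_norm, hy']
  have hmem : r0 ∈ {r : ℝ | ∃ lam : Fin m → ℝ, (∀ i, 0 ≤ lam i) ∧ (∑ i, lam i = 1) ∧
      r = ‖∑ i, lam i • gradient (f i) x‖} := ⟨lam0, hlam0.1, hlam0.2, rfl⟩
  have hlb : ∀ r ∈ {r : ℝ | ∃ lam : Fin m → ℝ, (∀ i, 0 ≤ lam i) ∧ (∑ i, lam i = 1) ∧
      r = ‖∑ i, lam i • gradient (f i) x‖}, r0 ≤ r := by
    rintro r ⟨lam, hln, hls, rfl⟩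
    have h1 : r0 ^ 2 ≤ ‖∑ i, lam i • gradient (f i) x‖ ^ 2 := by
      rw [hr0sq, hnorm lam hls]
      have hmem' : (∑ i, lam i • a i) ∈ S := by
        rw [hconv]; exact ⟨lam, ⟨hln, hls⟩, rfl⟩
      have : d ≤ ‖x.snd - ∑ i, lam i • a i‖ := by
        rw [← dist_eq_norm]; exact Metric.infDist_le_dist_of_mem hmem'
      have hd0 : 0 ≤ d := Metric.infDist_nonneg
      have h2 : d ^ 2 ≤ ‖x.snd - ∑ i, lam i • a i‖ ^ 2 := pow_le_pow_left₀ hd0 this 2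
      have h3 := mul_le_mul_of_nonneg_left h2 (sq_nonneg γ)
      linarith
    have h4 := Real.sqrt_le_sqrt h1
    rwa [Real.sqrt_sq (norm_nonneg _), Real.sqrt_sq (norm_nonneg _)] at h4
  have hGx : G x = r0 := by
    rw [hG x]
    exact IsLeast.csInf_eq ⟨hmem, hlb⟩
  constructor
  · rw [hGx]; exact hr0sq
  · rw [hGx]
    have : ‖c‖ ^ 2 ≤ r0 ^ 2 := by
      rw [hr0sq]; nlinarith [sq_nonneg (γ * d)]
    have h4 := Real.sqrt_le_sqrt this
    rwa [Real.sqrt_sq (norm_nonneg _), Real.sqrt_sq (norm_nonneg _)] at h4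
end
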